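/- arXiv:0909.3363 — 4 statements merged into one kernel-verified Lean document; each statement's English description precedes it below -/
import Mathlib

section
/- Let {φ(θ), θ ∈ T_0} be an admissible family of nonnegative random variables and for each stopping time S ∈ T_0 let v(S) = ess sup_{θ ∈ T_S} E[φ(θ) | F_S]. Then the family {v(S), S ∈ T_0} is itself admissible, i.e. (1) for every S ∈ T_0, v(S) is a nonnegative F_S-measurable random variable, and (2) for all S, S' ∈ T_0, v(S) = v(S') almost surely on the event {S = S'}. -/
open MeasureTheory Filter Set Topology

variable {Ω : Type*}

/-- `τ` belongs to `T_0`: it is a stopping time of `𝓕` with values in `[0, T]`. -/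
def MemT0 {m0 : MeasurableSpace Ω} (𝓕 : MeasureTheory.Filtration ℝ m0) (T : ℝ)
    (τ : Ω → ℝ) : Prop :=
  MeasureTheory.IsStoppingTime 𝓕 (fun ω => (τ ω : WithTop ℝ)) ∧ ∀ ω, τ ω ∈ Set.Icc (0 : ℝ) T

/-- `v` is an essential supremum of the family `f i`, `i` ranging over `{i | P i}`:
it dominates every member a.s. and is a.s. below any other a.s. upper bound. -/
def IsEssSupFam {m0 : MeasurableSpace Ω} (μ : MeasureTheory.Measure Ω) {ι : Sort*}
    (P : ι → Prop) (f : ι → Ω → ℝ) (v : Ω → ℝ) : Prop :=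
  (∀ i, P i → f i ≤ᵐ[μ] v) ∧ ∀ w : Ω → ℝ, (∀ i, P i → f i ≤ᵐ[μ] w) → v ≤ᵐ[μ] w

/-- `v` is an essential infimum of the family `f i`, `i` ranging over `{i | P i}`. -/
def IsEssInfFam {m0 : MeasurableSpace Ω} (μ : MeasureTheory.Measure Ω) {ι : Sort*}
    (P : ι → Prop) (f : ι → Ω → ℝ) (v : Ω → ℝ) : Prop :=
  (∀ i, P i → v ≤ᵐ[μ] f i) ∧ ∀ w : Ω → ℝ, (∀ i, P i → w ≤ᵐ[μ] f i) → w ≤ᵐ[μ] v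

/-- An admissible family of nonnegative random variables indexed by the stopping
times in `T_0`: `φ τ` is a nonnegative `F_τ`-measurable random variable, and
`φ τ = φ τ'` a.s. on `{τ = τ'}`. -/
def Admissible {m0 : MeasurableSpace Ω} (𝓕 : MeasureTheory.Filtration ℝ m0) (T : ℝ)
    (μ : MeasureTheory.Measure Ω) (φ : (Ω → ℝ) → Ω → ℝ) : Prop :=
  (∀ τ (hτ : MemT0 𝓕 T τ),
      Measurable[hτ.1.measurableSpace] (φ τ) ∧ ∀ ω, 0 ≤ φ τ ω) ∧
  ∀ τ τ', MemT0 𝓕 T τ → MemT0 𝓕 T τ' →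
    ∀ᵐ ω ∂μ, τ ω = τ' ω → φ τ ω = φ τ' ω

/-- An a.e. variant of admissibility (for families defined only up to a.s. equality,
such as value-function families): `φ τ` is a.s. nonnegative and a.s. equal to some
`F_τ`-measurable random variable, and `φ τ = φ τ'` a.s. on `{τ = τ'}`. -/
def AdmissibleAE {m0 : MeasurableSpace Ω} (𝓕 : MeasureTheory.Filtration ℝ m0) (T : ℝ)
    (μ : MeasureTheory.Measure Ω) (φ : (Ω → ℝ) → Ω → ℝ) : Prop :=
  (∀ τ (hτ : MemT0 𝓕 T τ),
      (∀ᵐ ω ∂μ, 0 ≤ φ τ ω) ∧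
      ∃ w : Ω → ℝ, Measurable[hτ.1.measurableSpace] w ∧ φ τ =ᵐ[μ] w) ∧
  ∀ τ τ', MemT0 𝓕 T τ → MemT0 𝓕 T τ' →
    ∀ᵐ ω ∂μ, τ ω = τ' ω → φ τ ω = φ τ' ω

/-- A biadmissible family: `ψ τ S` is a nonnegative `F_{τ ∨ S}`-measurable random
variable, and `ψ τ S = ψ τ' S'` a.s. on `{τ = τ'} ∩ {S = S'}`. -/
def Biadmissible {m0 : MeasurableSpace Ω} (𝓕 : MeasureTheory.Filtration ℝ m0) (T : ℝ)
    (μ : MeasureTheory.Measure Ω) (ψ : (Ω → ℝ) → (Ω → ℝ) → Ω → ℝ) : Prop :=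
  (∀ τ S (hτ : MemT0 𝓕 T τ) (hS : MemT0 𝓕 T S),
      Measurable[(hτ.1.max hS.1).measurableSpace] (ψ τ S) ∧ ∀ ω, 0 ≤ ψ τ S ω) ∧
  ∀ τ τ' S S', MemT0 𝓕 T τ → MemT0 𝓕 T τ' → MemT0 𝓕 T S → MemT0 𝓕 T S' →
    ∀ᵐ ω ∂μ, τ ω = τ' ω → S ω = S' ω → ψ τ S ω = ψ τ' S' ω

/-- `θn ↓ θ` a.s.: the sequence is a.s. nonincreasing and converges a.s. to `θ`. -/
def DownAS {m0 : MeasurableSpace Ω} (μ : MeasureTheory.Measure Ω)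
    (θn : ℕ → Ω → ℝ) (θ : Ω → ℝ) : Prop :=
  ∀ᵐ ω ∂μ, (∀ n, θn (n + 1) ω ≤ θn n ω) ∧
    Filter.Tendsto (fun n => θn n ω) Filter.atTop (nhds (θ ω))

/-- `θn ↑ θ` a.s.: the sequence is a.s. nondecreasing and converges a.s. to `θ`. -/
def UpAS {m0 : MeasurableSpace Ω} (μ : MeasureTheory.Measure Ω)
    (θn : ℕ → Ω → ℝ) (θ : Ω → ℝ) : Prop :=
  ∀ᵐ ω ∂μ, (∀ n, θn n ω ≤ θn (n + 1) ω) ∧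
    Filter.Tendsto (fun n => θn n ω) Filter.atTop (nhds (θ ω))

/-- The family `φ` is right continuous along stopping times in expectation. -/
def RCE {m0 : MeasurableSpace Ω} (𝓕 : MeasureTheory.Filtration ℝ m0) (T : ℝ)
    (μ : MeasureTheory.Measure Ω) (φ : (Ω → ℝ) → Ω → ℝ) : Prop :=
  ∀ θ, MemT0 𝓕 T θ → ∀ θn : ℕ → Ω → ℝ, (∀ n, MemT0 𝓕 T (θn n)) → DownAS μ θn θ →
    Filter.Tendsto (fun n => ∫ ω, φ (θn n) ω ∂μ) Filter.atTop (nhds (∫ ω, φ θ ω ∂μ))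

/-- The family `φ` is left continuous along stopping times in expectation. -/
def LCE {m0 : MeasurableSpace Ω} (𝓕 : MeasureTheory.Filtration ℝ m0) (T : ℝ)
    (μ : MeasureTheory.Measure Ω) (φ : (Ω → ℝ) → Ω → ℝ) : Prop :=
  ∀ θ, MemT0 𝓕 T θ → ∀ θn : ℕ → Ω → ℝ, (∀ n, MemT0 𝓕 T (θn n)) → UpAS μ θn θ →
    Filter.Tendsto (fun n => ∫ ω, φ (θn n) ω ∂μ) Filter.atTop (nhds (∫ ω, φ θ ω ∂μ))

/-- The biadmissible family `ψ` is uniformly right continuous in expectation along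
stopping times: for `S_n ↓ S` a.s. (all in `T_0`), the expectation of the essential
supremum over `θ ∈ T_0` of `|ψ(θ, S) - ψ(θ, S_n)|` (resp. `|ψ(S, θ) - ψ(S_n, θ)|`)
tends to `0`. -/
def URCE {m0 : MeasurableSpace Ω} (𝓕 : MeasureTheory.Filtration ℝ m0) (T : ℝ)
    (μ : MeasureTheory.Measure Ω) (ψ : (Ω → ℝ) → (Ω → ℝ) → Ω → ℝ) : Prop :=
  ∀ S, MemT0 𝓕 T S → ∀ Sn : ℕ → Ω → ℝ, (∀ n, MemT0 𝓕 T (Sn n)) → DownAS μ Sn S →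
    (∀ D : ℕ → Ω → ℝ,
      (∀ n, IsEssSupFam μ (MemT0 𝓕 T) (fun θ ω => |ψ θ S ω - ψ θ (Sn n) ω|) (D n)) →
      Filter.Tendsto (fun n => ∫ ω, D n ω ∂μ) Filter.atTop (nhds 0)) ∧
    ∀ D : ℕ → Ω → ℝ,
      (∀ n, IsEssSupFam μ (MemT0 𝓕 T) (fun θ ω => |ψ S θ ω - ψ (Sn n) θ ω|) (D n)) →
      Filter.Tendsto (fun n => ∫ ω, D n ω ∂μ) Filter.atTop (nhds 0)

/-- The biadmissible family `ψ` is uniformly left continuous in expectation along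
stopping times. -/
def ULCE {m0 : MeasurableSpace Ω} (𝓕 : MeasureTheory.Filtration ℝ m0) (T : ℝ)
    (μ : MeasureTheory.Measure Ω) (ψ : (Ω → ℝ) → (Ω → ℝ) → Ω → ℝ) : Prop :=
  ∀ S, MemT0 𝓕 T S → ∀ Sn : ℕ → Ω → ℝ, (∀ n, MemT0 𝓕 T (Sn n)) → UpAS μ Sn S →
    (∀ D : ℕ → Ω → ℝ,
      (∀ n, IsEssSupFam μ (MemT0 𝓕 T) (fun θ ω => |ψ θ S ω - ψ θ (Sn n) ω|) (D n)) →
      Filter.Tendsto (fun n => ∫ ω, D n ω ∂μ) Filter.atTop (nhds 0)) ∧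
    ∀ D : ℕ → Ω → ℝ,
      (∀ n, IsEssSupFam μ (MemT0 𝓕 T) (fun θ ω => |ψ S θ ω - ψ (Sn n) θ ω|) (D n)) →
      Filter.Tendsto (fun n => ∫ ω, D n ω ∂μ) Filter.atTop (nhds 0)


section Aux

variable {Ω : Type*}

open Real in
private lemma exists_measurable_essSupFam
    {m m0 : MeasurableSpace Ω} (hm : m ≤ m0)
    (μ : Measure Ω) [IsProbabilityMeasure μ] {ι : Type*} (P : ι → Prop)
    (f : ι → Ω → ℝ) (hmeas : ∀ i, P i → Measurable[m] (f i))
    (hne : ∃ i, P i)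
    (hdir : ∀ i j, P i → P j → ∃ k, P k ∧ ∀ᵐ ω ∂μ, max (f i ω) (f j ω) ≤ f k ω)
    (v : Ω → ℝ) (hv : ∀ i, P i → f i ≤ᵐ[μ] v) :
    ∃ w : Ω → ℝ, Measurable[m] w ∧ IsEssSupFam μ P f w := by
  classical
  -- integrability of arctan ∘ (any m-measurable function)
  have hint : ∀ g : Ω → ℝ, Measurable[m] g →
      Integrable (fun ω => arctan (g ω)) μ := by
    intro g hg
    refine ⟨(Real.continuous_arctan.measurable.comp (hg.mono hm le_rfl)).aestronglyMeasurable, ?_⟩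
    refine HasFiniteIntegral.of_bounded (C := π / 2) (Eventually.of_forall fun ω => ?_)
    rw [Real.norm_eq_abs, abs_le]
    exact ⟨(neg_pi_div_two_lt_arctan _).le, (arctan_lt_pi_div_two _).le⟩
  have harctan_le : ∀ g : Ω → ℝ, Measurable[m] g →
      ∫ ω, arctan (g ω) ∂μ ≤ π / 2 := by
    intro g hg
    calc ∫ ω, arctan (g ω) ∂μ ≤ ∫ _, π / 2 ∂μ :=
          integral_mono (hint g hg) (integrable_const _) fun ω => (arctan_lt_pi_div_two _).le
      _ = π / 2 := by simp
  set F : ι → ℝ := fun i => ∫ ω, arctan (f i ω) ∂μ with hF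
  set R : Set ℝ := F '' {i | P i} with hR
  have hRne : R.Nonempty := ⟨F hne.choose, hne.choose, hne.choose_spec, rfl⟩
  have hRbdd : BddAbove R := by
    refine ⟨π / 2, ?_⟩
    rintro r ⟨i, hi, rfl⟩
    exact harctan_le _ (hmeas i hi)
  set c : ℝ := sSup R with hc
  have hFc : ∀ i, P i → F i ≤ c := fun i hi => le_csSup hRbdd ⟨i, hi, rfl⟩
  -- maximizing sequence
  have hseq : ∀ n : ℕ, ∃ i, P i ∧ c - 1 / (n + 1) < F i := by
    intro n
    have h1 : c - 1 / (n + 1 : ℝ) < c := by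
      have : (0:ℝ) < 1 / (n + 1) := by positivity
      linarith
    obtain ⟨r, ⟨i, hi, rfl⟩, hr⟩ := exists_lt_of_lt_csSup hRne h1
    exact ⟨i, hi, hr⟩
  choose i hiP hilt using hseq
  -- directed monotone sequence dominating i
  have hstep : ∀ (a : {k // P k}) (n : ℕ), ∃ b : {k // P k},
      ∀ᵐ ω ∂μ, max (f a.1 ω) (f (i n) ω) ≤ f b.1 ω := by
    intro a n
    obtain ⟨k, hk, hkmax⟩ := hdir a.1 (i n) a.2 (hiP n)
    exact ⟨⟨k, hk⟩, hkmax⟩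
  let J : ℕ → {k // P k} := fun n =>
    Nat.rec (⟨i 0, hiP 0⟩ : {k // P k}) (fun n a => (hstep a (n + 1)).choose) n
  have hJsucc : ∀ n, ∀ᵐ ω ∂μ, max (f (J n).1 ω) (f (i (n + 1)) ω) ≤ f (J (n + 1)).1 ω :=
    fun n => (hstep (J n) (n + 1)).choose_spec
  set g : ℕ → Ω → ℝ := fun n => f (J n).1 with hg
  have hgmeas : ∀ n, Measurable[m] (g n) := fun n => hmeas _ (J n).2
  have hgmono : ∀ n, g n ≤ᵐ[μ] g (n + 1) := by
    intro n
    filter_upwards [hJsucc n] with ω hω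
    exact le_trans (le_max_left _ _) hω
  have hgi : ∀ n, f (i n) ≤ᵐ[μ] g n := by
    intro n
    cases n with
    | zero => exact Eventually.of_forall fun ω => le_rfl
    | succ n =>
      filter_upwards [hJsucc n] with ω hω
      exact le_trans (le_max_right _ _) hω
  have hgF : ∀ n, c - 1 / (n + 1) < ∫ ω, arctan (g n ω) ∂μ := by
    intro n
    refine lt_of_lt_of_le (hilt n) ?_
    refine integral_mono_ae (hint _ (hmeas _ (hiP n))) (hint _ (hgmeas n)) ?_
    filter_upwards [hgi n] with ω hω using arctan_strictMono.monotone hω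
  have hgc : ∀ n, ∫ ω, arctan (g n ω) ∂μ ≤ c := fun n => hFc _ (J n).2
  have hgv : ∀ n, g n ≤ᵐ[μ] v := fun n => hv _ (J n).2
  -- the candidate ess sup
  set w : Ω → ℝ := fun ω => ⨆ n, g n ω with hw
  have hwmeas : Measurable[m] w := Measurable.iSup hgmeas
  -- good set
  have hGood : ∀ᵐ ω ∂μ, Monotone (fun n => g n ω) ∧ (∀ n, g n ω ≤ v ω) := by
    have h1 : ∀ᵐ ω ∂μ, ∀ n, g n ω ≤ g (n + 1) ω := ae_all_iff.mpr hgmono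
    have h2 : ∀ᵐ ω ∂μ, ∀ n, g n ω ≤ v ω := ae_all_iff.mpr hgv
    filter_upwards [h1, h2] with ω hω1 hω2
    exact ⟨monotone_nat_of_le_succ hω1, hω2⟩
  have hGood' : ∀ᵐ ω ∂μ, (∀ n, g n ω ≤ w ω) ∧
      Tendsto (fun n => g n ω) atTop (nhds (w ω)) := by
    filter_upwards [hGood] with ω ⟨hmon, hbd⟩
    have hbdd : BddAbove (Set.range fun n => g n ω) := by
      refine ⟨v ω, ?_⟩
      rintro x ⟨n, rfl⟩
      exact hbd n
    exact ⟨fun n => le_ciSup hbdd n, tendsto_atTop_ciSup hmon hbdd⟩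
  refine ⟨w, hwmeas, ?_, ?_⟩
  · -- upper bound clause
    intro k hk
    -- difference function
    set d : Ω → ℝ := fun ω => arctan (max (f k ω) (w ω)) - arctan (w ω) with hd
    have hdmeas : Measurable[m] fun ω => max (f k ω) (w ω) := (hmeas k hk).max hwmeas
    have hdint : Integrable d μ := (hint _ hdmeas).sub (hint _ hwmeas)
    have hdnonneg : ∀ ω, 0 ≤ d ω := fun ω =>
      sub_nonneg.mpr (arctan_strictMono.monotone (le_max_right _ _))
    -- key antitone inequality: for t ≤ t',
    -- arctan (max x t') - arctan t' ≤ arctan (max x t) - arctan t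
    have hanti : ∀ x t t' : ℝ, t ≤ t' →
        arctan (max x t') - arctan t' ≤ arctan (max x t) - arctan t := by
      intro x t t' htt'
      rcases le_total x t with hxt | hxt
      · rw [max_eq_right hxt, max_eq_right (hxt.trans htt')]
        simp
      · rcases le_total x t' with hxt' | hxt'
        · rw [max_eq_right hxt', max_eq_left hxt]
          have h1 := arctan_strictMono.monotone hxt'
          have h2 := arctan_strictMono.monotone hxt
          linarith
        · rw [max_eq_left hxt', max_eq_left hxt]
          have := arctan_strictMono.monotone htt'
          linarith
    have hdle : ∀ n : ℕ, ∫ ω, d ω ∂μ ≤ 1 / (n + 1) := by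
      intro n
      obtain ⟨j, hjP, hjmax⟩ := hdir k (J n).1 hk (J n).2
      -- ∫ arctan (max (f k) (g n)) ≤ c
      have h1 : ∫ ω, arctan (max (f k ω) (g n ω)) ∂μ ≤ c := by
        refine le_trans ?_ (hFc j hjP)
        refine integral_mono_ae (hint _ ((hmeas k hk).max (hgmeas n)))
          (hint _ (hmeas j hjP)) ?_
        filter_upwards [hjmax] with ω hω using arctan_strictMono.monotone hω
      have h2 : ∫ ω, d ω ∂μ ≤
          ∫ ω, (arctan (max (f k ω) (g n ω)) - arctan (g n ω)) ∂μ := by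
        refine integral_mono_ae hdint
          ((hint _ ((hmeas k hk).max (hgmeas n))).sub (hint _ (hgmeas n))) ?_
        filter_upwards [hGood'] with ω ⟨hle, _⟩
        exact hanti (f k ω) (g n ω) (w ω) (hle n)
      have h3 : ∫ ω, (arctan (max (f k ω) (g n ω)) - arctan (g n ω)) ∂μ =
          (∫ ω, arctan (max (f k ω) (g n ω)) ∂μ) - ∫ ω, arctan (g n ω) ∂μ :=
        integral_sub (hint _ ((hmeas k hk).max (hgmeas n))) (hint _ (hgmeas n))
      have h4 := hgF n
      calc ∫ ω, d ω ∂μ ≤ _ := h2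
        _ = _ := h3
        _ ≤ c - (c - 1 / (n + 1)) := by linarith
        _ = 1 / (n + 1) := by ring
    have hdzero : ∫ ω, d ω ∂μ = 0 := by
      have hle0 : ∫ ω, d ω ∂μ ≤ 0 := by
        refine ge_of_tendsto' tendsto_one_div_add_atTop_nhds_zero_nat fun n => hdle n
      exact le_antisymm hle0 (integral_nonneg hdnonneg)
    have hdae : d =ᵐ[μ] 0 :=
      (integral_eq_zero_iff_of_nonneg_ae (Eventually.of_forall hdnonneg) hdint).mp hdzero
    filter_upwards [hdae] with ω hω
    have hω0 : arctan (max (f k ω) (w ω)) - arctan (w ω) = 0 := hω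
    have hmax : max (f k ω) (w ω) = w ω := arctan_injective (by linarith)
    exact le_of_max_le_left hmax.le
  · -- least upper bound clause
    intro u hu
    have h1 : ∀ᵐ ω ∂μ, ∀ n, g n ω ≤ u ω := ae_all_iff.mpr fun n => hu _ (J n).2
    filter_upwards [h1, hGood'] with ω hω ⟨_, htend⟩
    exact le_of_tendsto htend (Eventually.of_forall hω)

end Aux

private lemma indicator_condexp_congr
    {Ω : Type*} {m m' m0 : MeasurableSpace Ω} (hm : m ≤ m0) (hm' : m' ≤ m0)
    {μ : Measure Ω} [IsProbabilityMeasure μ]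
    {B : Set Ω} (hB : MeasurableSet[m] B)
    (h1 : ∀ C, MeasurableSet[m'] C → MeasurableSet[m] (B ∩ C))
    (h2 : ∀ C, MeasurableSet[m] C → MeasurableSet[m'] (B ∩ C))
    {X : Ω → ℝ} (hX : Integrable X μ) :
    ∀ᵐ ω ∂μ, ω ∈ B → (μ[X|m]) ω = (μ[X|m']) ω := by
  haveI : SigmaFinite (μ.trim hm) := by
    have : IsFiniteMeasure (μ.trim hm) := isFiniteMeasure_trim hm
    infer_instance
  haveI : SigmaFinite (μ.trim hm') := by
    have : IsFiniteMeasure (μ.trim hm') := isFiniteMeasure_trim hm'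
    infer_instance
  set h : Ω → ℝ := μ[X|m'] with hh
  have hhmeas : Measurable[m'] h := stronglyMeasurable_condExp.measurable
  set Y : Ω → ℝ := B.indicator h with hY
  have hYmeas : Measurable[m] Y := by
    intro t ht
    by_cases h0 : (0 : ℝ) ∈ t
    · have : Y ⁻¹' t = (B ∩ h ⁻¹' t) ∪ Bᶜ := by
        ext ω
        by_cases hωB : ω ∈ B <;>
          simp [hY, Set.indicator_of_mem, Set.indicator_of_notMem, hωB, h0]
      rw [this]
      exact (h1 _ (hhmeas ht)).union hB.compl
    · have : Y ⁻¹' t = B ∩ h ⁻¹' t := by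
        ext ω
        by_cases hωB : ω ∈ B <;>
          simp [hY, Set.indicator_of_mem, Set.indicator_of_notMem, hωB, h0]
      rw [this]
      exact h1 _ (hhmeas ht)
  have hBm0 : MeasurableSet B := hm _ hB
  have hYint : Integrable Y μ := integrable_condExp.indicator hBm0
  have hXBint : Integrable (B.indicator X) μ := hX.indicator hBm0
  have hYcond : Y =ᵐ[μ] μ[B.indicator X|m] := by
    refine ae_eq_condExp_of_forall_setIntegral_eq hm hXBint
      (fun s _ _ => hYint.integrableOn) (fun s hs _ => ?_)
      ⟨Y, hYmeas.stronglyMeasurable, EventuallyEq.rfl⟩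
    have hsB' : MeasurableSet[m'] (s ∩ B) := by
      rw [Set.inter_comm]; exact h2 s hs
    calc ∫ ω in s, Y ω ∂μ = ∫ ω in s ∩ B, h ω ∂μ := setIntegral_indicator hBm0
      _ = ∫ ω in s ∩ B, X ω ∂μ := setIntegral_condExp hm' hX hsB'
      _ = ∫ ω in s, B.indicator X ω ∂μ := (setIntegral_indicator hBm0).symm
  have hBind : B.indicator (μ[X|m]) =ᵐ[μ] μ[B.indicator X|m] :=
    (condExp_indicator hX hB).symm
  filter_upwards [hYcond, hBind] with ω hω1 hω2 hωB
  have : B.indicator (μ[X|m]) ω = Y ω := by rw [hω2, ← hω1]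
  simpa [hY, Set.indicator_of_mem hωB] using this

private lemma stop_meas_iff
    {Ω : Type*} {m0 : MeasurableSpace Ω} {𝓕 : Filtration ℝ m0} {S : Ω → ℝ}
    (hS : IsStoppingTime 𝓕 (fun ω => (S ω : WithTop ℝ))) {A : Set Ω}
    (hA : MeasurableSet[hS.measurableSpace] A) (t : ℝ) :
    MeasurableSet[𝓕 t] (A ∩ {ω | S ω ≤ t}) := by
  have := ((hS.measurableSet A).mp hA).2 t
  simpa only [WithTop.coe_le_coe] using this

private lemma stop_le_meas
    {Ω : Type*} {m0 : MeasurableSpace Ω} {𝓕 : Filtration ℝ m0} {S : Ω → ℝ}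
    (hS : IsStoppingTime 𝓕 (fun ω => (S ω : WithTop ℝ))) (t : ℝ) :
    MeasurableSet[𝓕 t] {ω | S ω ≤ t} := by
  simpa only [WithTop.coe_le_coe] using hS t

private lemma inter_stop_mem
    {Ω : Type*} {m0 : MeasurableSpace Ω} {𝓕 : Filtration ℝ m0} {μ : Measure Ω}
    (hFnull : ∀ A : Set Ω, μ A = 0 → MeasurableSet[𝓕 0] A)
    {S θ : Ω → ℝ} (hS : IsStoppingTime 𝓕 (fun ω => (S ω : WithTop ℝ)))
    (hθ : IsStoppingTime 𝓕 (fun ω => (θ ω : WithTop ℝ)))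
    (hθ0 : ∀ ω, 0 ≤ θ ω)
    (hle : S ≤ᵐ[μ] θ) {A : Set Ω} (hA : MeasurableSet[hS.measurableSpace] A) (t : ℝ) :
    MeasurableSet[𝓕 t] (A ∩ {ω | θ ω ≤ t}) := by
  rcases lt_or_ge t 0 with ht | ht
  · have : A ∩ {ω | θ ω ≤ t} = ∅ := by
      ext ω
      simp only [Set.mem_inter_iff, Set.mem_setOf_eq, Set.mem_empty_iff_false, iff_false]
      rintro ⟨-, hωt⟩
      exact absurd (le_trans (hθ0 ω) hωt) (not_le.mpr ht)
    rw [this]; exact @MeasurableSet.empty _ (𝓕 t)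
  · have hdecomp : A ∩ {ω | θ ω ≤ t} =
        ((A ∩ {ω | S ω ≤ t}) ∩ {ω | θ ω ≤ t}) ∪
          (A ∩ {ω | θ ω ≤ t} ∩ {ω | S ω ≤ t}ᶜ) := by
      ext ω
      by_cases hωS : S ω ≤ t <;>
        simp [Set.mem_inter_iff, Set.mem_setOf_eq, hωS, and_assoc]
    rw [hdecomp]
    refine MeasurableSet.union ((stop_meas_iff hS hA t).inter (stop_le_meas hθ t)) ?_
    have hnull : μ (A ∩ {ω | θ ω ≤ t} ∩ {ω | S ω ≤ t}ᶜ) = 0 := by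
      refine measure_mono_null (fun ω hω => ?_) (ae_iff.mp hle)
      simp only [Set.mem_inter_iff, Set.mem_setOf_eq, Set.mem_compl_iff, not_le] at hω ⊢
      exact lt_of_le_of_lt hω.1.2 hω.2
    exact 𝓕.mono ht _ (hFnull _ hnull)

private lemma isStoppingTime_ite
    {Ω : Type*} {m0 : MeasurableSpace Ω} {𝓕 : Filtration ℝ m0}
    {A : Set Ω} {θ θ' : Ω → ℝ} [DecidablePred (· ∈ A)]
    (h : ∀ t : ℝ, MeasurableSet[𝓕 t] (A ∩ {ω | θ ω ≤ t}))
    (h' : ∀ t : ℝ, MeasurableSet[𝓕 t] (Aᶜ ∩ {ω | θ' ω ≤ t})) :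
    IsStoppingTime 𝓕 (fun ω => (((if ω ∈ A then θ ω else θ' ω) : ℝ) : WithTop ℝ)) := by
  intro t
  have : {ω | (if ω ∈ A then θ ω else θ' ω) ≤ t} =
      (A ∩ {ω | θ ω ≤ t}) ∪ (Aᶜ ∩ {ω | θ' ω ≤ t}) := by
    ext ω
    by_cases hωA : ω ∈ A <;> simp [hωA]
  simp only [WithTop.coe_le_coe]
  rw [this]
  exact (h t).union (h' t)

private lemma condexp_indicator_add_compl
    {Ω : Type*} {m m0 : MeasurableSpace Ω} (hm : m ≤ m0)
    {μ : Measure Ω} [IsProbabilityMeasure μ] {A : Set Ω} (hA : MeasurableSet[m] A)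
    {f g : Ω → ℝ} (hf : Integrable f μ) (hg : Integrable g μ) :
    μ[A.indicator f + Aᶜ.indicator g|m] =ᵐ[μ]
      fun ω => A.indicator (μ[f|m]) ω + Aᶜ.indicator (μ[g|m]) ω := by
  have e2 := condExp_add (μ := μ) (m := m) (hf.indicator (hm _ hA))
    (hg.indicator (hm _ hA.compl))
  have e3 := condExp_indicator (μ := μ) hf hA
  have e4 := condExp_indicator (μ := μ) hg hA.compl
  filter_upwards [e2, e3, e4] with ω a2 a3 a4
  rw [a2, Pi.add_apply, a3, a4]

/-- If `{φ(θ), θ ∈ T_0}` is an admissible family of nonnegative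
random variables and `v(S) = ess sup_{θ ∈ T_S} E[φ(θ) | F_S]`, then the family
`{v(S), S ∈ T_0}` is itself admissible: `v(S)` is a nonnegative `F_S`-measurable
random variable (up to a.s. equality), and `v(S) = v(S')` a.s. on `{S = S'}`. -/
theorem value_family_admissible
    {m0 : MeasurableSpace Ω} (μ : Measure Ω) [IsProbabilityMeasure μ]
    (𝓕 : Filtration ℝ m0) (T : ℝ) (hT : 0 ≤ T)
    (hFright : ∀ t : ℝ, 𝓕 t = ⨅ s ∈ Set.Ioi t, 𝓕 s)
    (hFnull : ∀ A : Set Ω, μ A = 0 → MeasurableSet[𝓕 0] A)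
    (φ : (Ω → ℝ) → Ω → ℝ)
    (hφ : Admissible 𝓕 T μ φ)
    (hφint : ∀ τ, MemT0 𝓕 T τ → Integrable (φ τ) μ)
    (V : (Ω → ℝ) → Ω → ℝ)
    (hV : ∀ S (hS : MemT0 𝓕 T S),
      IsEssSupFam μ (fun θ => MemT0 𝓕 T θ ∧ S ≤ᵐ[μ] θ)
        (fun θ => μ[φ θ | hS.1.measurableSpace]) (V S)) :
    AdmissibleAE 𝓕 T μ V := by
  classical
  have hdir : ∀ S (hS : MemT0 𝓕 T S), ∀ θ θ',
      (MemT0 𝓕 T θ ∧ S ≤ᵐ[μ] θ) → (MemT0 𝓕 T θ' ∧ S ≤ᵐ[μ] θ') →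
      ∃ k, (MemT0 𝓕 T k ∧ S ≤ᵐ[μ] k) ∧
        ∀ᵐ ω ∂μ, max ((μ[φ θ|hS.1.measurableSpace]) ω)
            ((μ[φ θ'|hS.1.measurableSpace]) ω) ≤ (μ[φ k|hS.1.measurableSpace]) ω := by
    intro S hS θ θ' hθ hθ'
    set m := hS.1.measurableSpace with hmdef
    have hm : m ≤ m0 := hS.1.measurableSpace_le
    set A : Set Ω := {ω | (μ[φ θ'|m]) ω ≤ (μ[φ θ|m]) ω} with hA
    have hAm : MeasurableSet[m] A :=
      stronglyMeasurable_condExp.measurableSet_le stronglyMeasurable_condExp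
    set k : Ω → ℝ := fun ω => if ω ∈ A then θ ω else θ' ω with hk
    have hkst : IsStoppingTime 𝓕 (fun ω => (k ω : WithTop ℝ)) :=
      isStoppingTime_ite
        (fun t => inter_stop_mem hFnull hS.1 hθ.1.1 (fun ω => (hθ.1.2 ω).1) hθ.2 hAm t)
        (fun t => inter_stop_mem hFnull hS.1 hθ'.1.1 (fun ω => (hθ'.1.2 ω).1) hθ'.2
          hAm.compl t)
    have hkT0 : MemT0 𝓕 T k := by
      refine ⟨hkst, fun ω => ?_⟩
      by_cases hω : ω ∈ A
      · simpa [hk, hω] using hθ.1.2 ω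
      · simpa [hk, hω] using hθ'.1.2 ω
    have hSk : S ≤ᵐ[μ] k := by
      filter_upwards [hθ.2, hθ'.2] with ω h1 h2
      by_cases hω : ω ∈ A
      · simpa [hk, hω] using h1
      · simpa [hk, hω] using h2
    have hφk : φ k =ᵐ[μ] A.indicator (φ θ) + Aᶜ.indicator (φ θ') := by
      filter_upwards [hφ.2 k θ hkT0 hθ.1, hφ.2 k θ' hkT0 hθ'.1] with ω h1 h2
      simp only [Pi.add_apply]
      by_cases hω : ω ∈ A
      · rw [Set.indicator_of_mem hω, Set.indicator_of_notMem (Set.notMem_compl_iff.mpr hω),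
          add_zero]
        exact h1 (if_pos hω)
      · rw [Set.indicator_of_notMem hω, Set.indicator_of_mem (Set.mem_compl hω), zero_add]
        exact h2 (if_neg hω)
    have hcond : μ[φ k|m] =ᵐ[μ] fun ω => max ((μ[φ θ|m]) ω) ((μ[φ θ'|m]) ω) := by
      have e1 : μ[φ k|m] =ᵐ[μ] μ[A.indicator (φ θ) + Aᶜ.indicator (φ θ')|m] :=
        condExp_congr_ae hφk
      have e2 := condexp_indicator_add_compl hm hAm (hφint θ hθ.1) (hφint θ' hθ'.1)
      filter_upwards [e1, e2] with ω a1 a2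
      rw [a1, a2]
      by_cases hω : ω ∈ A
      · have hle : (μ[φ θ'|m]) ω ≤ (μ[φ θ|m]) ω := hω
        rw [Set.indicator_of_mem hω, Set.indicator_of_notMem (Set.notMem_compl_iff.mpr hω),
          add_zero, max_eq_left hle]
      · have hle : (μ[φ θ|m]) ω ≤ (μ[φ θ'|m]) ω := (not_le.mp hω).le
        rw [Set.indicator_of_notMem hω, Set.indicator_of_mem (Set.mem_compl hω), zero_add,
          max_eq_right hle]
    refine ⟨k, ⟨hkT0, hSk⟩, ?_⟩
    filter_upwards [hcond] with ω h
    rw [h]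
  constructor
  · intro S hS
    have hm : hS.1.measurableSpace ≤ m0 := hS.1.measurableSpace_le
    have hself : MemT0 𝓕 T S ∧ S ≤ᵐ[μ] S := ⟨hS, EventuallyLE.refl _ _⟩
    constructor
    · have h1 : 0 ≤ᵐ[μ] μ[φ S|hS.1.measurableSpace] :=
        condExp_nonneg (Eventually.of_forall fun ω => (hφ.1 S hS).2 ω)
      have h2 := (hV S hS).1 S hself
      filter_upwards [h1, h2] with ω a b using le_trans a b
    · obtain ⟨w, hwmeas, hw⟩ := exists_measurable_essSupFam hm μ
        (fun θ => MemT0 𝓕 T θ ∧ S ≤ᵐ[μ] θ) (fun θ => μ[φ θ|hS.1.measurableSpace])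
        (fun θ _ => stronglyMeasurable_condExp.measurable) ⟨S, hself⟩
        (hdir S hS) (V S) (hV S hS).1
      exact ⟨w, hwmeas, ((hV S hS).2 w hw.1).antisymm (hw.2 (V S) (hV S hS).1)⟩
  · have key : ∀ S S' (hS : MemT0 𝓕 T S) (hS' : MemT0 𝓕 T S'),
        ∀ᵐ ω ∂μ, S ω = S' ω → V S ω ≤ V S' ω := by
      intro S S' hS hS'
      set m := hS.1.measurableSpace with hmdef
      set m' := hS'.1.measurableSpace with hm'def
      have hm : m ≤ m0 := hS.1.measurableSpace_le
      have hm' : m' ≤ m0 := hS'.1.measurableSpace_le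
      set B : Set Ω := {ω | S ω = S' ω} with hB
      have hBm : MeasurableSet[m] B := by
        have := hS.1.measurableSet_eq_stopping_time hS'.1
        simp only [WithTop.coe_eq_coe] at this
        exact this
      have hBm' : MeasurableSet[m'] B := by
        have h := hS'.1.measurableSet_eq_stopping_time hS.1
        simp only [WithTop.coe_eq_coe] at h
        have heq : {ω | S' ω = S ω} = B := by
          ext ω; exact eq_comm
        rwa [heq] at h
      have h1 : ∀ C, MeasurableSet[m'] C → MeasurableSet[m] (B ∩ C) := by
        intro C hC
        refine (hS.1.measurableSet _).mpr ⟨((hS.1.measurableSet B).mp hBm).1.inter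
          ((hS'.1.measurableSet C).mp hC).1, fun t => ?_⟩
        simp only [WithTop.coe_le_coe]
        have hsplit : B ∩ C ∩ {ω | S ω ≤ t} =
            (B ∩ {ω | S ω ≤ t}) ∩ (C ∩ {ω | S' ω ≤ t}) := by
          ext ω
          simp only [Set.mem_inter_iff, Set.mem_setOf_eq, hB]
          constructor
          · rintro ⟨⟨hb, hc⟩, hs⟩
            exact ⟨⟨hb, hs⟩, hc, hb ▸ hs⟩
          · rintro ⟨⟨hb, hs⟩, hc, -⟩
            exact ⟨⟨hb, hc⟩, hs⟩
        rw [hsplit]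
        exact (stop_meas_iff hS.1 hBm t).inter (stop_meas_iff hS'.1 hC t)
      have h2 : ∀ C, MeasurableSet[m] C → MeasurableSet[m'] (B ∩ C) := by
        intro C hC
        refine (hS'.1.measurableSet _).mpr ⟨((hS'.1.measurableSet B).mp hBm').1.inter
          ((hS.1.measurableSet C).mp hC).1, fun t => ?_⟩
        simp only [WithTop.coe_le_coe]
        have hsplit : B ∩ C ∩ {ω | S' ω ≤ t} =
            (B ∩ {ω | S' ω ≤ t}) ∩ (C ∩ {ω | S ω ≤ t}) := by
          ext ω
          simp only [Set.mem_inter_iff, Set.mem_setOf_eq, hB]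
          constructor
          · rintro ⟨⟨hb, hc⟩, hs⟩
            exact ⟨⟨hb, hs⟩, hc, hb ▸ hs⟩
          · rintro ⟨⟨hb, hs⟩, hc, -⟩
            exact ⟨⟨hb, hc⟩, hs⟩
        rw [hsplit]
        exact (stop_meas_iff hS'.1 hBm' t).inter (stop_meas_iff hS.1 hC t)
      set wfun : Ω → ℝ := fun ω => if S ω = S' ω then V S' ω else V S ω with hwfun
      have hbound : ∀ θ, (MemT0 𝓕 T θ ∧ S ≤ᵐ[μ] θ) → μ[φ θ|m] ≤ᵐ[μ] wfun := by
        intro θ hθ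
        set θ' : Ω → ℝ := fun ω => if ω ∈ B then θ ω else max (θ ω) (S' ω) with hθ'def
        have hθ'st : IsStoppingTime 𝓕 (fun ω => (θ' ω : WithTop ℝ)) := by
          refine isStoppingTime_ite ?_ ?_
          · exact fun t =>
              inter_stop_mem hFnull hS.1 hθ.1.1 (fun ω => (hθ.1.2 ω).1) hθ.2 hBm t
          · exact fun t =>
              inter_stop_mem hFnull hS'.1 (θ := fun ω => max (θ ω) (S' ω)) (hθ.1.1.max hS'.1)
                (fun ω => le_trans (hθ.1.2 ω).1 (le_max_left _ _))
                (Eventually.of_forall fun ω => le_max_right _ _) hBm'.compl t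
        have hθ'T0 : MemT0 𝓕 T θ' := by
          refine ⟨hθ'st, fun ω => ?_⟩
          by_cases hω : ω ∈ B
          · simpa [hθ'def, hω] using hθ.1.2 ω
          · have ha := hθ.1.2 ω
            have hb := hS'.2 ω
            simp only [hθ'def, if_neg hω]
            exact ⟨le_trans ha.1 (le_max_left _ _), max_le ha.2 hb.2⟩
        have hS'θ' : S' ≤ᵐ[μ] θ' := by
          filter_upwards [hθ.2] with ω h
          by_cases hω : ω ∈ B
          · have hBω : S ω = S' ω := hω
            simp only [hθ'def, if_pos hω]
            rw [← hBω]
            exact h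
          · simp [hθ'def, hω]
        have hφeq : B.indicator (φ θ) =ᵐ[μ] B.indicator (φ θ') := by
          filter_upwards [hφ.2 θ θ' hθ.1 hθ'T0] with ω h
          by_cases hω : ω ∈ B
          · rw [Set.indicator_of_mem hω, Set.indicator_of_mem hω]
            exact h (by simp [hθ'def, hω])
          · rw [Set.indicator_of_notMem hω, Set.indicator_of_notMem hω]
        have hc1 : ∀ᵐ ω ∂μ, ω ∈ B → (μ[φ θ|m]) ω = (μ[φ θ'|m]) ω := by
          have e1 := condExp_indicator (μ := μ) (hφint θ hθ.1) hBm
          have e2 := condExp_indicator (μ := μ) (hφint θ' hθ'T0) hBm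
          have e3 := condExp_congr_ae (m := m) (μ := μ) hφeq
          filter_upwards [e1, e2, e3] with ω a1 a2 a3 hωB
          have : B.indicator (μ[φ θ|m]) ω = B.indicator (μ[φ θ'|m]) ω := by
            rw [← a1, ← a2, a3]
          rwa [Set.indicator_of_mem hωB, Set.indicator_of_mem hωB] at this
        have hc2 : ∀ᵐ ω ∂μ, ω ∈ B → (μ[φ θ'|m]) ω = (μ[φ θ'|m']) ω :=
          indicator_condexp_congr hm hm' hBm h1 h2 (hφint θ' hθ'T0)
        have hc3 : μ[φ θ'|m'] ≤ᵐ[μ] V S' := (hV S' hS').1 θ' ⟨hθ'T0, hS'θ'⟩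
        have hc4 : μ[φ θ|m] ≤ᵐ[μ] V S := (hV S hS).1 θ hθ
        filter_upwards [hc1, hc2, hc3, hc4] with ω a1 a2 a3 a4
        by_cases hω : ω ∈ B
        · have hBω : S ω = S' ω := hω
          simp only [hwfun, if_pos hBω]
          rw [a1 hω, a2 hω]
          exact a3
        · have hBω : ¬S ω = S' ω := hω
          simp only [hwfun, if_neg hBω]
          exact a4
      have hle := (hV S hS).2 wfun hbound
      filter_upwards [hle] with ω h hSS'
      have h' : V S ω ≤ wfun ω := h
      simpa [hwfun, hSS'] using h'
    intro S S' hS hS'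
    filter_upwards [key S S' hS hS', key S' S hS' hS] with ω h1 h2 hSS'
    exact le_antisymm (h1 hSS') (h2 hSS'.symm)
end

section
/- Let {φ(θ), θ ∈ T_0} be an admissible family of nonnegative random variables and for each stopping time S ∈ T_0 let v(S) = ess sup_{θ ∈ T_S} E[φ(θ) | F_S]. Then {v(S), S ∈ T_0} is a supermartingale system: for any stopping time S ∈ T_0 and any stopping times θ, θ' ∈ T_S with θ ≥ θ' a.s., one has E[v(θ) | F_{θ'}] ≤ v(θ') almost surely. -/
open MeasureTheory Filter Set Topology

variable {Ω : Type*}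

/-- If the filtration contains all null sets at time `0`, the σ-algebras of two a.e. equal
nonnegative stopping times coincide. -/
lemma stMeasurableSpace_le_of_ae_eq {m0 : MeasurableSpace Ω} {𝓕 : Filtration ℝ m0}
    {μ : Measure Ω} (hFnull : ∀ A : Set Ω, μ A = 0 → MeasurableSet[𝓕 0] A)
    {τ σ : Ω → ℝ} (hτ : IsStoppingTime 𝓕 (fun ω => (τ ω : WithTop ℝ)))
    (hσ : IsStoppingTime 𝓕 (fun ω => (σ ω : WithTop ℝ)))
    (hσ0 : ∀ ω, 0 ≤ σ ω) (h : τ =ᵐ[μ] σ) :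
    hτ.measurableSpace ≤ hσ.measurableSpace := by
  intro A hA
  rw [IsStoppingTime.measurableSet] at hA ⊢
  simp only [WithTop.coe_le_coe] at hA ⊢
  refine ⟨hA.1, fun t => ?_⟩
  rcases lt_or_ge t 0 with ht | ht
  · have : A ∩ {ω | σ ω ≤ t} = ∅ := by
      ext ω; simp only [Set.mem_inter_iff, Set.mem_setOf_eq, Set.mem_empty_iff_false,
        iff_false, not_and]
      intro _ hle
      exact absurd (le_trans (hσ0 ω) hle) (not_le.mpr ht)
    rw [this]; exact @MeasurableSet.empty _ (𝓕 t)
  · set N := {ω | ¬ τ ω = σ ω} with hN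
    have hNnull : μ N = 0 := by
      have := h; rw [Filter.EventuallyEq, ae_iff] at this; exact this
    have hsplit : A ∩ {ω | σ ω ≤ t} =
        ((A ∩ {ω | τ ω ≤ t}) ∩ Nᶜ) ∪ ((A ∩ {ω | σ ω ≤ t}) ∩ N) := by
      ext ω
      by_cases hω : ω ∈ N
      · simp only [Set.mem_union, Set.mem_inter_iff, Set.mem_compl_iff, hω,
          not_true_eq_false, and_false, false_or, and_true]
      · have heq : τ ω = σ ω := not_not.mp hω
        simp only [Set.mem_union, Set.mem_inter_iff, Set.mem_compl_iff, hω,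
          not_false_eq_true, and_true, and_false, or_false, Set.mem_setOf_eq, heq]
    rw [hsplit]
    have h1 : MeasurableSet[𝓕 t] N := 𝓕.mono ht _ (hFnull N hNnull)
    have h2 : MeasurableSet[𝓕 t] ((A ∩ {ω | σ ω ≤ t}) ∩ N) :=
      𝓕.mono ht _ (hFnull _ (measure_mono_null Set.inter_subset_right hNnull))
    exact ((hA.2 t).inter h1.compl).union h2

lemma stMeasurableSpace_eq_of_ae_eq {m0 : MeasurableSpace Ω} {𝓕 : Filtration ℝ m0}
    {μ : Measure Ω} (hFnull : ∀ A : Set Ω, μ A = 0 → MeasurableSet[𝓕 0] A)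
    {τ σ : Ω → ℝ} (hτ : IsStoppingTime 𝓕 (fun ω => (τ ω : WithTop ℝ)))
    (hσ : IsStoppingTime 𝓕 (fun ω => (σ ω : WithTop ℝ)))
    (hτ0 : ∀ ω, 0 ≤ τ ω) (hσ0 : ∀ ω, 0 ≤ σ ω) (h : τ =ᵐ[μ] σ) :
    hτ.measurableSpace = hσ.measurableSpace :=
  le_antisymm (stMeasurableSpace_le_of_ae_eq hFnull hτ hσ hσ0 h)
    (stMeasurableSpace_le_of_ae_eq hFnull hσ hτ hτ0 h.symm)

/-- Piecewise of two stopping times dominating a stopping time `ρ`, along a set in the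
σ-algebra of `ρ`, is a stopping time. -/
lemma isStoppingTime_piecewise {m0 : MeasurableSpace Ω} {𝓕 : Filtration ℝ m0}
    {τ σ ρ : Ω → ℝ} {A : Set Ω} [DecidablePred (· ∈ A)]
    (hτ : IsStoppingTime 𝓕 (fun ω => (τ ω : WithTop ℝ)))
    (hσ : IsStoppingTime 𝓕 (fun ω => (σ ω : WithTop ℝ)))
    (hρ : IsStoppingTime 𝓕 (fun ω => (ρ ω : WithTop ℝ)))
    (h1 : ∀ ω, ρ ω ≤ τ ω) (h2 : ∀ ω, ρ ω ≤ σ ω)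
    (hA : MeasurableSet[hρ.measurableSpace] A) :
    IsStoppingTime 𝓕 (fun ω => (A.piecewise τ σ ω : WithTop ℝ)) := by
  intro t
  simp only [WithTop.coe_le_coe]
  have hset : {ω | A.piecewise τ σ ω ≤ t} =
      ((A ∩ {ω | ρ ω ≤ t}) ∩ {ω | τ ω ≤ t}) ∪ ((Aᶜ ∩ {ω | ρ ω ≤ t}) ∩ {ω | σ ω ≤ t}) := by
    ext ω
    constructor
    · intro h
      by_cases hω : ω ∈ A
      · left
        have hτω : τ ω ≤ t := by simpa [Set.piecewise, hω] using h
        exact ⟨⟨hω, le_trans (h1 ω) hτω⟩, hτω⟩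
      · right
        have hσω : σ ω ≤ t := by simpa [Set.piecewise, hω] using h
        exact ⟨⟨hω, le_trans (h2 ω) hσω⟩, hσω⟩
    · intro h
      rcases h with ⟨⟨hω, _⟩, hτω⟩ | ⟨⟨hω, _⟩, hσω⟩
      · simpa [Set.piecewise, hω] using hτω
      · have hω2 : ω ∉ A := hω
        simpa [Set.piecewise, hω2] using hσω
  rw [hset]
  have hA' := hA.2 t
  have hAc := hA.compl.2 t
  have hτt := hτ t
  have hσt := hσ t
  simp only [WithTop.coe_le_coe] at hA' hAc hτt hσt
  exact (((hA').inter (hτt)).union (((hAc)).inter (hσt)))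

/-- A measurable a.e. limit of an a.e. convergent sequence of `AEMeasurable` functions. -/
lemma exists_measurable_limit {m0 : MeasurableSpace Ω} {μ : Measure Ω} {f : ℕ → Ω → ℝ}
    (hf : ∀ n, AEMeasurable (f n) μ)
    (h : ∀ᵐ ω ∂μ, ∃ l, Filter.Tendsto (fun n => f n ω) Filter.atTop (nhds l)) :
    ∃ g : Ω → ℝ, Measurable g ∧
      ∀ᵐ ω ∂μ, Filter.Tendsto (fun n => f n ω) Filter.atTop (nhds (g ω)) :=
  measurable_limit_of_tendsto_metrizable_ae hf h

/-- The value-function family `{v(S), S ∈ T_0}`, where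
`v(S) = ess sup_{θ ∈ T_S} E[φ(θ) | F_S]`, is a supermartingale system: for any
`S ∈ T_0` and `θ, θ' ∈ T_S` with `θ ≥ θ'` a.s., `E[v(θ) | F_{θ'}] ≤ v(θ')` a.s. -/
theorem value_family_supermartingale_system
    {m0 : MeasurableSpace Ω} (μ : Measure Ω) [IsProbabilityMeasure μ]
    (𝓕 : Filtration ℝ m0) (T : ℝ) (hT : 0 ≤ T)
    (hFright : ∀ t : ℝ, 𝓕 t = ⨅ s ∈ Set.Ioi t, 𝓕 s)
    (hFnull : ∀ A : Set Ω, μ A = 0 → MeasurableSet[𝓕 0] A)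
    (φ : (Ω → ℝ) → Ω → ℝ)
    (hφ : Admissible 𝓕 T μ φ)
    (hφint : ∀ τ, MemT0 𝓕 T τ → Integrable (φ τ) μ)
    (V : (Ω → ℝ) → Ω → ℝ)
    (hV : ∀ S (hS : MemT0 𝓕 T S),
      IsEssSupFam μ (fun θ => MemT0 𝓕 T θ ∧ S ≤ᵐ[μ] θ)
        (fun θ => μ[φ θ | hS.1.measurableSpace]) (V S)) :
    ∀ S, MemT0 𝓕 T S →
      ∀ θ θ' (_hθ : MemT0 𝓕 T θ) (hθ' : MemT0 𝓕 T θ'),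
        S ≤ᵐ[μ] θ → S ≤ᵐ[μ] θ' → θ' ≤ᵐ[μ] θ →
        μ[V θ | hθ'.1.measurableSpace] ≤ᵐ[μ] V θ' := by
  classical
  intro S hS θ θ' hθ hθ' hSθ hSθ' hθ'θ
  set m : MeasurableSpace Ω := hθ.1.measurableSpace with hm_def
  set m' : MeasurableSpace Ω := hθ'.1.measurableSpace with hm'_def
  have hm0 : m ≤ m0 := hθ.1.measurableSpace_le
  have hm'0 : m' ≤ m0 := hθ'.1.measurableSpace_le
  haveI hsf : SigmaFinite (μ.trim hm0) := by infer_instance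
  haveI hsf' : SigmaFinite (μ.trim hm'0) := by infer_instance
  -- `m' ≤ m`
  have hm'm : m' ≤ m := by
    have hτst : IsStoppingTime 𝓕 (fun ω => ((max (θ ω) (θ' ω) : ℝ) : WithTop ℝ)) := by
      simpa only [WithTop.coe_max] using hθ.1.max hθ'.1
    have h1 : m' ≤ hτst.measurableSpace :=
      IsStoppingTime.measurableSpace_mono hθ'.1 hτst (fun ω => WithTop.coe_le_coe.mpr (le_max_right _ _))
    have h2 : hτst.measurableSpace = m := by
      refine stMeasurableSpace_eq_of_ae_eq hFnull hτst hθ.1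
        (fun ω => le_trans (hθ.2 ω).1 (le_max_left _ _)) (fun ω => (hθ.2 ω).1) ?_
      filter_upwards [hθ'θ] with ω hω
      exact max_eq_left hω
    exact h1.trans h2.le
  -- nonnegativity of `V θ'`
  have hVθ'nn : (0 : Ω → ℝ) ≤ᵐ[μ] V θ' := by
    have h1 : μ[φ θ' | m'] ≤ᵐ[μ] V θ' :=
      (hV θ' hθ').1 θ' ⟨hθ', Filter.EventuallyLE.refl _ _⟩
    have h2 : (0 : Ω → ℝ) ≤ᵐ[μ] μ[φ θ' | m'] :=
      condExp_nonneg (Filter.Eventually.of_forall fun ω => (hφ.1 θ' hθ').2 ω)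
    exact h2.trans h1
  by_cases hVint : Integrable (V θ) μ
  swap
  · rw [condExp_of_not_integrable hVint]
    exact hVθ'nn
  -- main case
  set P : (Ω → ℝ) → Prop := fun σ => MemT0 𝓕 T σ ∧ θ ≤ᵐ[μ] σ with hP_def
  set g : (Ω → ℝ) → Ω → ℝ := fun σ => μ[φ σ | m] with hg_def
  have hgint : ∀ σ, Integrable (g σ) μ := fun _ => integrable_condExp
  have hgnn : ∀ σ, MemT0 𝓕 T σ → (0 : Ω → ℝ) ≤ᵐ[μ] g σ := fun σ hσ =>
    condExp_nonneg (Filter.Eventually.of_forall fun ω => (hφ.1 σ hσ).2 ω)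
  have hgle : ∀ σ, P σ → g σ ≤ᵐ[μ] V θ := (hV θ hθ).1
  have hPθ : P θ := ⟨hθ, Filter.EventuallyLE.refl _ _⟩
  -- directedness
  have dir : ∀ σ₁ σ₂, P σ₁ → P σ₂ →
      ∃ σ₃, P σ₃ ∧ g σ₁ ≤ᵐ[μ] g σ₃ ∧ g σ₂ ≤ᵐ[μ] g σ₃ := by
    intro σ₁ σ₂ h₁ h₂
    set σ₁' : Ω → ℝ := fun ω => max (σ₁ ω) (θ ω) with hσ₁'def
    set σ₂' : Ω → ℝ := fun ω => max (σ₂ ω) (θ ω) with hσ₂'def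
    have h₁st : IsStoppingTime 𝓕 (fun ω => (σ₁' ω : WithTop ℝ)) := by
      rw [hσ₁'def]; simpa only [WithTop.coe_max] using h₁.1.1.max hθ.1
    have h₂st : IsStoppingTime 𝓕 (fun ω => (σ₂' ω : WithTop ℝ)) := by
      rw [hσ₂'def]; simpa only [WithTop.coe_max] using h₂.1.1.max hθ.1
    have mem₁ : MemT0 𝓕 T σ₁' :=
      ⟨h₁st, fun ω => ⟨le_trans (h₁.1.2 ω).1 (le_max_left _ _),
        max_le (h₁.1.2 ω).2 (hθ.2 ω).2⟩⟩
    have mem₂ : MemT0 𝓕 T σ₂' :=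
      ⟨h₂st, fun ω => ⟨le_trans (h₂.1.2 ω).1 (le_max_left _ _),
        max_le (h₂.1.2 ω).2 (hθ.2 ω).2⟩⟩
    have e₁ : φ σ₁' =ᵐ[μ] φ σ₁ := by
      filter_upwards [hφ.2 σ₁' σ₁ mem₁ h₁.1, h₁.2] with ω hw hle
      exact hw (max_eq_left hle)
    have e₂ : φ σ₂' =ᵐ[μ] φ σ₂ := by
      filter_upwards [hφ.2 σ₂' σ₂ mem₂ h₂.1, h₂.2] with ω hw hle
      exact hw (max_eq_left hle)
    have ge₁ : g σ₁' =ᵐ[μ] g σ₁ := condExp_congr_ae e₁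
    have ge₂ : g σ₂' =ᵐ[μ] g σ₂ := condExp_congr_ae e₂
    set A : Set Ω := {ω | g σ₂' ω ≤ g σ₁' ω} with hAdef
    have hA : MeasurableSet[m] A :=
      measurableSet_le (stronglyMeasurable_condExp.measurable)
        (stronglyMeasurable_condExp.measurable)
    set σ₃ : Ω → ℝ := A.piecewise σ₁' σ₂' with hσ₃def
    have h₃st : IsStoppingTime 𝓕 (fun ω => (σ₃ ω : WithTop ℝ)) :=
      isStoppingTime_piecewise h₁st h₂st hθ.1 (fun ω => le_max_right _ _)
        (fun ω => le_max_right _ _) hA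
    have hθσ₃ : ∀ ω, θ ω ≤ σ₃ ω := by
      intro ω
      by_cases hω : ω ∈ A
      · simp only [hσ₃def, Set.piecewise, hω, if_true]
        exact le_max_right _ _
      · simp only [hσ₃def, Set.piecewise, hω, if_false]
        exact le_max_right _ _
    have mem₃ : MemT0 𝓕 T σ₃ := by
      refine ⟨h₃st, fun ω => ?_⟩
      by_cases hω : ω ∈ A
      · simpa [hσ₃def, Set.piecewise, hω] using mem₁.2 ω
      · simpa [hσ₃def, Set.piecewise, hω] using mem₂.2 ω
    have e₃ : φ σ₃ =ᵐ[μ] A.indicator (φ σ₁') + Aᶜ.indicator (φ σ₂') := by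
      filter_upwards [hφ.2 σ₃ σ₁' mem₃ mem₁, hφ.2 σ₃ σ₂' mem₃ mem₂] with ω w1 w2
      by_cases hω : ω ∈ A
      · have : σ₃ ω = σ₁' ω := by simp [hσ₃def, Set.piecewise, hω]
        simp [Set.indicator_apply, hω, w1 this]
      · have : σ₃ ω = σ₂' ω := by simp [hσ₃def, Set.piecewise, hω]
        simp [Set.indicator_apply, hω, w2 this]
    have hφ₁int : Integrable (A.indicator (φ σ₁')) μ :=
      (hφint σ₁' mem₁).indicator (hm0 A hA)
    have hφ₂int : Integrable (Aᶜ.indicator (φ σ₂')) μ :=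
      (hφint σ₂' mem₂).indicator (hm0 Aᶜ hA.compl)
    have hgmax : g σ₃ =ᵐ[μ] fun ω => max (g σ₁' ω) (g σ₂' ω) := by
      have c1 : g σ₃ =ᵐ[μ] μ[A.indicator (φ σ₁') + Aᶜ.indicator (φ σ₂') | m] :=
        condExp_congr_ae e₃
      have c2 : μ[A.indicator (φ σ₁') + Aᶜ.indicator (φ σ₂') | m]
          =ᵐ[μ] μ[A.indicator (φ σ₁') | m] + μ[Aᶜ.indicator (φ σ₂') | m] :=
        condExp_add hφ₁int hφ₂int m
      have c3 : μ[A.indicator (φ σ₁') | m] =ᵐ[μ] A.indicator (g σ₁') :=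
        condExp_indicator (hφint σ₁' mem₁) hA
      have c4 : μ[Aᶜ.indicator (φ σ₂') | m] =ᵐ[μ] Aᶜ.indicator (g σ₂') :=
        condExp_indicator (hφint σ₂' mem₂) hA.compl
      refine (c1.trans c2).trans ?_
      filter_upwards [c3, c4] with ω w3 w4
      simp only [Pi.add_apply, w3, w4]
      by_cases hω : ω ∈ A
      · have hle : g σ₂' ω ≤ g σ₁' ω := hω
        simp [Set.indicator_apply, hω, max_eq_left hle]
      · have hle : g σ₁' ω ≤ g σ₂' ω := le_of_not_ge hω
        simp [Set.indicator_apply, hω, max_eq_right hle]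
    refine ⟨σ₃, ⟨mem₃, Filter.Eventually.of_forall hθσ₃⟩, ?_, ?_⟩
    · filter_upwards [ge₁, hgmax] with ω w1 w2
      rw [← w1, w2]; exact le_max_left _ _
    · filter_upwards [ge₂, hgmax] with ω w1 w2
      rw [← w1, w2]; exact le_max_right _ _
  -- supremum of integrals over the family
  have hVabs : Integrable (fun ω => |V θ ω|) μ := hVint.abs
  set I : Set ℝ := (fun σ => ∫ ω, g σ ω ∂μ) '' {σ | P σ} with hI_def
  have hIne : I.Nonempty := ⟨_, ⟨θ, hPθ, rfl⟩⟩
  have hIbdd : BddAbove I := by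
    refine ⟨∫ ω, V θ ω ∂μ, ?_⟩
    rintro x ⟨σ, hσ, rfl⟩
    exact integral_mono_ae (hgint σ) hVint (hgle σ hσ)
  set c : ℝ := sSup I with hc_def
  have hc_le : ∀ σ, P σ → ∫ ω, g σ ω ∂μ ≤ c := fun σ hσ => le_csSup hIbdd ⟨σ, hσ, rfl⟩
  have approx : ∀ n : ℕ, ∃ σ, P σ ∧ c - 1/(n+1 : ℝ) < ∫ ω, g σ ω ∂μ := by
    intro n
    have hlt : c - 1/(n+1:ℝ) < c := by
      have h1 : (0:ℝ) < 1/(n+1:ℝ) := by positivity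
      linarith
    obtain ⟨x, hx, hlt2⟩ := exists_lt_of_lt_csSup hIne hlt
    obtain ⟨σ, hσ, rfl⟩ := hx
    exact ⟨σ, hσ, hlt2⟩
  choose σn hσnP hσnlt using approx
  -- a recursively chosen nondecreasing sequence realizing the supremum
  set nxt : (Ω → ℝ) → ℕ → (Ω → ℝ) := fun σ n =>
    if hh : P σ then (dir σ (σn n) hh (hσnP n)).choose else σn n with hnxt_def
  set ρ : ℕ → Ω → ℝ := fun n => Nat.rec (σn 0) (fun k ih => nxt ih (k+1)) n with hρ_def
  have hρ_succ : ∀ n, ρ (n+1) = nxt (ρ n) (n+1) := fun n => rfl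
  have hρP : ∀ n, P (ρ n) := by
    intro n
    induction n with
    | zero => exact hσnP 0
    | succ k ih =>
      rw [hρ_succ k, hnxt_def]
      simp only [dif_pos ih]
      exact (dir (ρ k) (σn (k+1)) ih (hσnP (k+1))).choose_spec.1
  have hρmono : ∀ n, g (ρ n) ≤ᵐ[μ] g (ρ (n+1)) := by
    intro n
    rw [hρ_succ n, hnxt_def]
    simp only [dif_pos (hρP n)]
    exact (dir (ρ n) (σn (n+1)) (hρP n) (hσnP (n+1))).choose_spec.2.1
  have hρlt : ∀ n : ℕ, c - 1/(n+1:ℝ) < ∫ ω, g (ρ n) ω ∂μ := by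
    intro n
    cases n with
    | zero =>
      have h0 : ρ 0 = σn 0 := rfl
      simpa [h0] using hσnlt 0
    | succ k =>
      have h1 := hσnlt (k+1)
      have h2 : ∫ ω, g (σn (k+1)) ω ∂μ ≤ ∫ ω, g (ρ (k+1)) ω ∂μ := by
        refine integral_mono_ae (hgint _) (hgint _) ?_
        rw [hρ_succ k, hnxt_def]
        simp only [dif_pos (hρP k)]
        exact (dir (ρ k) (σn (k+1)) (hρP k) (hσnP (k+1))).choose_spec.2.2
      linarith
  -- the a.e. limit G of the sequence
  have hmono_ae : ∀ᵐ ω ∂μ, ∀ n, g (ρ n) ω ≤ g (ρ (n+1)) ω := ae_all_iff.mpr hρmono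
  have hbd_ae : ∀ᵐ ω ∂μ, ∀ n, g (ρ n) ω ≤ V θ ω := ae_all_iff.mpr fun n => hgle _ (hρP n)
  have hconv : ∀ᵐ ω ∂μ, ∃ l, Tendsto (fun n => g (ρ n) ω) atTop (nhds l) := by
    filter_upwards [hmono_ae, hbd_ae] with ω h1 h2
    have hmono' : Monotone fun n => g (ρ n) ω := monotone_nat_of_le_succ h1
    refine ⟨_, tendsto_atTop_ciSup hmono' ⟨V θ ω, ?_⟩⟩
    rintro x ⟨n, rfl⟩; exact h2 n
  have hgaemeas : ∀ σ, AEMeasurable (g σ) μ := fun σ =>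
    ((stronglyMeasurable_condExp.mono hm0).measurable).aemeasurable
  obtain ⟨G, hGmeas, hGtend⟩ := exists_measurable_limit (m0 := m0) (fun n => hgaemeas (ρ n)) hconv
  have hGub : ∀ n, g (ρ n) ≤ᵐ[μ] G := by
    intro n; filter_upwards [hGtend, hmono_ae] with ω ht hmn
    exact Monotone.ge_of_tendsto (monotone_nat_of_le_succ hmn) ht n
  have hGleV : G ≤ᵐ[μ] V θ := by
    filter_upwards [hGtend, hbd_ae] with ω ht hb
    exact le_of_tendsto ht (Filter.Eventually.of_forall hb)
  have hGnn : ∀ᵐ ω ∂μ, 0 ≤ G ω := by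
    filter_upwards [hGub 0, hgnn (ρ 0) (hρP 0).1] with ω h1 h2
    exact le_trans h2 h1
  have hGint : Integrable G μ := by
    refine Integrable.mono hVint hGmeas.aestronglyMeasurable ?_
    filter_upwards [hGnn, hGleV] with ω h1 h2
    rw [Real.norm_eq_abs, Real.norm_eq_abs, abs_of_nonneg h1]
    exact h2.trans (le_abs_self _)
  have hint_tend : Tendsto (fun n => ∫ ω, g (ρ n) ω ∂μ) atTop (nhds (∫ ω, G ω ∂μ)) := by
    refine tendsto_integral_of_dominated_convergence (fun ω => |V θ ω|)
      (fun n => (hgaemeas (ρ n)).aestronglyMeasurable) hVabs ?_ hGtend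
    intro n
    filter_upwards [hgnn (ρ n) (hρP n).1, hgle _ (hρP n)] with ω h1 h2
    rw [Real.norm_eq_abs, abs_of_nonneg h1]
    exact h2.trans (le_abs_self _)
  have hint_c : Tendsto (fun n => ∫ ω, g (ρ n) ω ∂μ) atTop (nhds c) := by
    have hlow : Tendsto (fun n : ℕ => c - 1/(n+1:ℝ)) atTop (nhds c) := by
      have h1 := tendsto_one_div_add_atTop_nhds_zero_nat (𝕜 := ℝ)
      have h2 := (tendsto_const_nhds (x := c) (f := atTop (α := ℕ))).sub h1
      simpa using h2
    exact tendsto_of_tendsto_of_tendsto_of_le_of_le hlow tendsto_const_nhds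
      (fun n => (hρlt n).le) (fun n => hc_le _ (hρP n))
  have hGc : ∫ ω, G ω ∂μ = c := tendsto_nhds_unique hint_tend hint_c
  -- G is an a.e. upper bound of the whole family
  have hub : ∀ σ, P σ → g σ ≤ᵐ[μ] G := by
    intro σ hσ
    have hmaxint : ∀ n, Integrable (fun ω => max (g σ ω) (g (ρ n) ω)) μ := fun n =>
      (hgint σ).sup (hgint (ρ n))
    have hkey : ∀ n, ∫ ω, max (g σ ω) (g (ρ n) ω) ∂μ ≤ c := by
      intro n
      obtain ⟨σ₃, h₃P, hle1, hle2⟩ := dir σ (ρ n) hσ (hρP n)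
      have hle3 : (fun ω => max (g σ ω) (g (ρ n) ω)) ≤ᵐ[μ] g σ₃ := by
        filter_upwards [hle1, hle2] with ω w1 w2; exact max_le w1 w2
      exact (integral_mono_ae (hmaxint n) (hgint σ₃) hle3).trans (hc_le σ₃ h₃P)
    have hmaxGint : Integrable (fun ω => max (g σ ω) (G ω)) μ := (hgint σ).sup hGint
    have habsbd : Integrable (fun ω => |g σ ω| + |V θ ω|) μ := (hgint σ).abs.add hVabs
    have htmax : Tendsto (fun n => ∫ ω, max (g σ ω) (g (ρ n) ω) ∂μ) atTop
        (nhds (∫ ω, max (g σ ω) (G ω) ∂μ)) := by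
      refine tendsto_integral_of_dominated_convergence (fun ω => |g σ ω| + |V θ ω|)
        (fun n => ((hgaemeas σ).max (hgaemeas (ρ n))).aestronglyMeasurable) habsbd ?_ ?_
      · intro n
        filter_upwards [hgnn (ρ n) (hρP n).1, hgle _ (hρP n)] with ω h1 h2
        have h1' : (0:ℝ) ≤ g (ρ n) ω := h1
        have a1 := abs_nonneg (g σ ω)
        have a2 := abs_nonneg (V θ ω)
        have a3 := le_abs_self (g σ ω)
        have a4 := neg_abs_le (g σ ω)
        have a5 := le_abs_self (V θ ω)
        rw [Real.norm_eq_abs, abs_le]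
        rcases le_total (g σ ω) (g (ρ n) ω) with hcmp | hcmp
        · rw [max_eq_right hcmp]
          constructor <;> linarith
        · rw [max_eq_left hcmp]
          constructor <;> linarith
      · filter_upwards [hGtend] with ω ht
        exact tendsto_const_nhds.max ht
    have hfinal : ∫ ω, max (g σ ω) (G ω) ∂μ ≤ c :=
      le_of_tendsto htmax (Filter.Eventually.of_forall hkey)
    have hdiff_nn : 0 ≤ᵐ[μ] fun ω => max (g σ ω) (G ω) - G ω :=
      Filter.Eventually.of_forall fun ω => sub_nonneg.mpr (le_max_right _ _)
    have hdiff_int : Integrable (fun ω => max (g σ ω) (G ω) - G ω) μ := hmaxGint.sub hGint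
    have hzero : ∫ ω, (max (g σ ω) (G ω) - G ω) ∂μ = 0 := by
      refine le_antisymm ?_ (integral_nonneg_of_ae hdiff_nn)
      rw [integral_sub hmaxGint hGint, hGc]
      linarith
    have hae0 := (integral_eq_zero_iff_of_nonneg_ae hdiff_nn hdiff_int).mp hzero
    filter_upwards [hae0] with ω hω
    have hω' : max (g σ ω) (G ω) - G ω = 0 := hω
    have : g σ ω ≤ max (g σ ω) (G ω) := le_max_left _ _
    linarith
  have hVG : V θ =ᵐ[μ] G := ((hV θ hθ).2 G hub).antisymm hGleV
  -- the final supermartingale inequality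
  have tower : ∀ n, μ[g (ρ n) | m'] =ᵐ[μ] μ[φ (ρ n) | m'] := fun n =>
    condExp_condExp_of_le hm'm hm0
  have hfam' : ∀ n, μ[φ (ρ n) | m'] ≤ᵐ[μ] V θ' := fun n =>
    (hV θ' hθ').1 (ρ n) ⟨(hρP n).1, hθ'θ.trans (hρP n).2⟩
  set hseq : ℕ → Ω → ℝ := fun n => μ[V θ - g (ρ n) | m'] with hh_def
  have hVgint : ∀ n, Integrable (V θ - g (ρ n)) μ := fun n => hVint.sub (hgint _)
  have hdec : ∀ n, hseq (n+1) ≤ᵐ[μ] hseq n := by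
    intro n
    refine condExp_mono (hVgint (n+1)) (hVgint n) ?_
    filter_upwards [hρmono n] with ω hω
    simp only [Pi.sub_apply]
    linarith
  have hnn : ∀ n, (0 : Ω → ℝ) ≤ᵐ[μ] hseq n := by
    intro n
    refine condExp_nonneg ?_
    filter_upwards [hgle _ (hρP n)] with ω hω
    simp only [Pi.sub_apply, Pi.zero_apply]
    linarith
  have hsplit : ∀ n, ∀ᵐ ω ∂μ, (μ[V θ|m']) ω = hseq n ω + (μ[g (ρ n)|m']) ω := by
    intro n
    have hcs : μ[V θ - g (ρ n)|m'] =ᵐ[μ] μ[V θ|m'] - μ[g (ρ n)|m'] :=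
      condExp_sub hVint (hgint (ρ n)) m'
    filter_upwards [hcs] with ω hω
    simp only [Pi.sub_apply] at hω
    have hωeq : hseq n ω = (μ[V θ|m']) ω - (μ[g (ρ n)|m']) ω := hω
    linarith
  have hint_h : Tendsto (fun n => ∫ ω, hseq n ω ∂μ) atTop (nhds 0) := by
    have hVc : ∫ ω, V θ ω ∂μ = c := by
      rw [integral_congr_ae hVG]; exact hGc
    have heq : ∀ n, ∫ ω, hseq n ω ∂μ = c - ∫ ω, g (ρ n) ω ∂μ := by
      intro n
      have e1 : ∫ ω, hseq n ω ∂μ = ∫ ω, (V θ - g (ρ n)) ω ∂μ := integral_condExp hm'0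
      have e2 : ∫ ω, (V θ - g (ρ n)) ω ∂μ = ∫ ω, (V θ ω - g (ρ n) ω) ∂μ := rfl
      rw [e1, e2, integral_sub hVint (hgint _), hVc]
    simp only [heq]
    have h2 := (tendsto_const_nhds (x := c) (f := atTop (α := ℕ))).sub hint_c
    simpa using h2
  have hhmeas : ∀ n, AEMeasurable (hseq n) μ := fun n =>
    ((stronglyMeasurable_condExp.mono hm'0).measurable).aemeasurable
  have hconv_h : ∀ᵐ ω ∂μ, ∃ l, Tendsto (fun n => hseq n ω) atTop (nhds l) := by
    filter_upwards [ae_all_iff.mpr hdec, ae_all_iff.mpr hnn] with ω h1 h2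
    have hanti : Antitone fun n => hseq n ω := antitone_nat_of_succ_le h1
    refine ⟨_, tendsto_atTop_ciInf hanti ⟨0, ?_⟩⟩
    rintro x ⟨n, rfl⟩; exact h2 n
  obtain ⟨H, hHmeas, hHtend⟩ := exists_measurable_limit (m0 := m0) hhmeas hconv_h
  have hHnn : ∀ᵐ ω ∂μ, 0 ≤ H ω := by
    filter_upwards [hHtend, ae_all_iff.mpr hnn] with ω ht h2
    exact ge_of_tendsto ht (Filter.Eventually.of_forall fun n => h2 n)
  have hHle : ∀ n, H ≤ᵐ[μ] hseq n := by
    intro n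
    filter_upwards [hHtend, ae_all_iff.mpr hdec] with ω ht h1
    exact Antitone.le_of_tendsto (antitone_nat_of_succ_le h1) ht n
  have hHint : Integrable H μ := by
    refine Integrable.mono (integrable_condExp : Integrable (hseq 0) μ)
      hHmeas.aestronglyMeasurable ?_
    filter_upwards [hHnn, hHle 0, hnn 0] with ω h1 h2 h3
    rw [Real.norm_eq_abs, Real.norm_eq_abs, abs_of_nonneg h1, abs_of_nonneg h3]
    exact h2
  have hH0 : H =ᵐ[μ] 0 := by
    have hHzero : ∫ ω, H ω ∂μ = 0 := by
      refine le_antisymm ?_ (integral_nonneg_of_ae hHnn)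
      refine ge_of_tendsto hint_h (Filter.Eventually.of_forall fun n => ?_)
      exact integral_mono_ae hHint integrable_condExp (hHle n)
    exact (integral_eq_zero_iff_of_nonneg_ae hHnn hHint).mp hHzero
  have hcomb : ∀ n, ∀ᵐ ω ∂μ, (μ[V θ|m']) ω ≤ hseq n ω + V θ' ω := by
    intro n
    filter_upwards [hsplit n, tower n, hfam' n] with ω h1 h2 h3
    rw [h1, h2]
    linarith
  filter_upwards [ae_all_iff.mpr hcomb, hHtend, hH0] with ω h1 ht h0
  have htend2 : Tendsto (fun n => hseq n ω + V θ' ω) atTop (nhds (H ω + V θ' ω)) :=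
    ht.add tendsto_const_nhds
  have hfin : (μ[V θ|m']) ω ≤ H ω + V θ' ω :=
    ge_of_tendsto htend2 (Filter.Eventually.of_forall h1)
  have h0' : H ω = 0 := h0
  linarith
end

section
/- Let {φ(θ), θ ∈ T_0} be an admissible family of nonnegative random variables which is right continuous along stopping times in expectation and satisfies E[ess sup_{θ ∈ T_0} φ(θ)] < ∞. Then the value-function family {v(S), S ∈ T_0}, where v(S) = ess sup_{θ ∈ T_S} E[φ(θ) | F_S], is right continuous along stopping times in expectation: for any S ∈ T_0 and any sequence of stopping times S_n ↓ S a.s., one has E[v(S_n)] → E[v(S)]. -/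
open MeasureTheory Filter Set Topology

variable {Ω : Type*}

section Helpers

variable {m0 : MeasurableSpace Ω} {μ : Measure Ω} [IsProbabilityMeasure μ]
  {𝓕 : Filtration ℝ m0} {T : ℝ} {φ : (Ω → ℝ) → Ω → ℝ} {Z : Ω → ℝ}

lemma MemT0.max' {τ σ : Ω → ℝ} (hτ : MemT0 𝓕 T τ) (hσ : MemT0 𝓕 T σ) :
    MemT0 𝓕 T (fun ω => max (τ ω) (σ ω)) :=
  ⟨by simpa only [WithTop.coe_max] using hτ.1.max hσ.1, fun ω => ⟨le_max_of_le_left (hτ.2 ω).1, max_le (hτ.2 ω).2 (hσ.2 ω).2⟩⟩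

lemma integrable_of_memT0 (hφ : Admissible 𝓕 T μ φ)
    (hZ : IsEssSupFam μ (MemT0 𝓕 T) φ Z) (hZint : Integrable Z μ)
    {τ : Ω → ℝ} (hτ : MemT0 𝓕 T τ) : Integrable (φ τ) μ := by
  refine hZint.mono' (((hφ.1 τ hτ).1.mono hτ.1.measurableSpace_le le_rfl).aestronglyMeasurable) ?_
  filter_upwards [hZ.1 τ hτ] with ω h
  rw [Real.norm_eq_abs, abs_of_nonneg ((hφ.1 τ hτ).2 ω)]
  exact h

lemma paste_lemma (hφ : Admissible 𝓕 T μ φ)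
    (hφint : ∀ τ, MemT0 𝓕 T τ → Integrable (φ τ) μ)
    {S a b : Ω → ℝ} (hS : MemT0 𝓕 T S) (ha : MemT0 𝓕 T a) (hb : MemT0 𝓕 T b)
    (hSa : S ≤ᵐ[μ] a) (hSb : S ≤ᵐ[μ] b) :
    ∃ τ, (MemT0 𝓕 T τ ∧ S ≤ᵐ[μ] τ) ∧
      μ[φ a|hS.1.measurableSpace] ≤ᵐ[μ] μ[φ τ|hS.1.measurableSpace] ∧
      μ[φ b|hS.1.measurableSpace] ≤ᵐ[μ] μ[φ τ|hS.1.measurableSpace] := by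
  set m := hS.1.measurableSpace with hm_def
  have hm : m ≤ m0 := hS.1.measurableSpace_le
  set f := μ[φ a|m] with hf_def
  set g := μ[φ b|m] with hg_def
  set A : Set Ω := {ω | g ω ≤ f ω} with hA_def
  have hA : MeasurableSet[m] A :=
    measurableSet_le (stronglyMeasurable_condExp.measurable)
      (stronglyMeasurable_condExp.measurable)
  set a' : Ω → ℝ := fun ω => max (a ω) (S ω) with ha'_def
  set b' : Ω → ℝ := fun ω => max (b ω) (S ω) with hb'_def
  have ha' : MemT0 𝓕 T a' := ha.max' hS
  have hb' : MemT0 𝓕 T b' := hb.max' hS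
  set τ : Ω → ℝ := A.piecewise a' b' with hτ_def
  -- τ is a stopping time
  have hτst : IsStoppingTime 𝓕 (fun ω => (τ ω : WithTop ℝ)) := by
    intro t
    have hset : {ω | (τ ω : WithTop ℝ) ≤ t} =
        (A ∩ {ω | (S ω : WithTop ℝ) ≤ t} ∩ {ω | (a' ω : WithTop ℝ) ≤ t}) ∪
          ((Aᶜ ∩ {ω | (S ω : WithTop ℝ) ≤ t}) ∩ {ω | (b' ω : WithTop ℝ) ≤ t}) := by
      ext ω
      by_cases hω : ω ∈ A <;>
        simp [τ, Set.piecewise, hω, a', b', max_le_iff] <;> tauto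
    rw [hset]
    exact (((hA.2 t).inter (ha'.1 t)) ).union (((hA.compl.2 t)).inter (hb'.1 t))
  have hτT0 : MemT0 𝓕 T τ := by
    refine ⟨hτst, fun ω => ?_⟩
    by_cases hω : ω ∈ A <;> simp only [τ, Set.piecewise, hω, if_true, if_false] <;>
      [exact ha'.2 ω; exact hb'.2 ω]
  have hSτ : ∀ ω, S ω ≤ τ ω := by
    intro ω
    by_cases hω : ω ∈ A <;> simp only [τ, Set.piecewise, hω, if_true, if_false] <;>
      [exact le_max_right _ _; exact le_max_right _ _]
  -- φ a' = φ a a.e., φ b' = φ b a.e.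
  have hφa' : φ a' =ᵐ[μ] φ a := by
    filter_upwards [hφ.2 a' a ha' ha, hSa] with ω h1 h2
    exact h1 (max_eq_left h2)
  have hφb' : φ b' =ᵐ[μ] φ b := by
    filter_upwards [hφ.2 b' b hb' hb, hSb] with ω h1 h2
    exact h1 (max_eq_left h2)
  -- indicator equalities
  have hindA : A.indicator (φ τ) =ᵐ[μ] A.indicator (φ a) := by
    filter_upwards [hφ.2 τ a' hτT0 ha', hφa'] with ω h1 h2
    by_cases hω : ω ∈ A
    · rw [Set.indicator_of_mem hω, Set.indicator_of_mem hω,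
        h1 (by simp [τ, Set.piecewise, hω]), h2]
    · rw [Set.indicator_of_notMem hω, Set.indicator_of_notMem hω]
  have hindB : Aᶜ.indicator (φ τ) =ᵐ[μ] Aᶜ.indicator (φ b) := by
    filter_upwards [hφ.2 τ b' hτT0 hb', hφb'] with ω h1 h2
    by_cases hω : ω ∈ A
    · rw [Set.indicator_of_notMem (by simpa using hω),
        Set.indicator_of_notMem (by simpa using hω)]
    · rw [Set.indicator_of_mem (by simpa using hω), Set.indicator_of_mem (by simpa using hω),
        h1 (by simp [τ, Set.piecewise, hω]), h2]
  have keyA : A.indicator (μ[φ τ|m]) =ᵐ[μ] A.indicator f := by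
    calc A.indicator (μ[φ τ|m]) =ᵐ[μ] μ[A.indicator (φ τ)|m] :=
          (condExp_indicator (hφint τ hτT0) hA).symm
      _ =ᵐ[μ] μ[A.indicator (φ a)|m] := condExp_congr_ae hindA
      _ =ᵐ[μ] A.indicator f := condExp_indicator (hφint a ha) hA
  have keyB : Aᶜ.indicator (μ[φ τ|m]) =ᵐ[μ] Aᶜ.indicator g := by
    calc Aᶜ.indicator (μ[φ τ|m]) =ᵐ[μ] μ[Aᶜ.indicator (φ τ)|m] :=
          (condExp_indicator (hφint τ hτT0) hA.compl).symm
      _ =ᵐ[μ] μ[Aᶜ.indicator (φ b)|m] := condExp_congr_ae hindB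
      _ =ᵐ[μ] Aᶜ.indicator g := condExp_indicator (hφint b hb) hA.compl
  refine ⟨τ, ⟨hτT0, Eventually.of_forall hSτ⟩, ?_, ?_⟩
  · filter_upwards [keyA, keyB] with ω h1 h2
    by_cases hω : ω ∈ A
    · rw [Set.indicator_of_mem hω, Set.indicator_of_mem hω] at h1
      exact h1.ge
    · rw [Set.indicator_of_mem (by simpa using hω), Set.indicator_of_mem (by simpa using hω)] at h2
      exact (le_of_not_ge (show ¬ (g ω ≤ f ω) from hω)).trans_eq h2.symm
  · filter_upwards [keyA, keyB] with ω h1 h2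
    by_cases hω : ω ∈ A
    · rw [Set.indicator_of_mem hω, Set.indicator_of_mem hω] at h1
      exact (show g ω ≤ f ω from hω).trans_eq h1.symm
    · rw [Set.indicator_of_mem (by simpa using hω), Set.indicator_of_mem (by simpa using hω)] at h2
      exact h2.ge

lemma integral_value_eq_sSup (hφ : Admissible 𝓕 T μ φ)
    (hZ : IsEssSupFam μ (MemT0 𝓕 T) φ Z) (hZint : Integrable Z μ)
    {S : Ω → ℝ} (hS : MemT0 𝓕 T S) {v : Ω → ℝ}
    (hv : IsEssSupFam μ (fun θ => MemT0 𝓕 T θ ∧ S ≤ᵐ[μ] θ)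
      (fun θ => μ[φ θ|hS.1.measurableSpace]) v) :
    ∫ ω, v ω ∂μ = sSup {x | ∃ θ, MemT0 𝓕 T θ ∧ S ≤ᵐ[μ] θ ∧ ∫ ω, φ θ ω ∂μ = x} := by
  have hφint : ∀ τ, MemT0 𝓕 T τ → Integrable (φ τ) μ :=
    fun τ hτ => integrable_of_memT0 hφ hZ hZint hτ
  set m := hS.1.measurableSpace with hm_def
  have hm : m ≤ m0 := hS.1.measurableSpace_le
  haveI : SigmaFinite (μ.trim hm) := inferInstance
  set E : Set ℝ := {x | ∃ θ, MemT0 𝓕 T θ ∧ S ≤ᵐ[μ] θ ∧ ∫ ω, φ θ ω ∂μ = x} with hE_def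
  have hEne : E.Nonempty := ⟨∫ ω, φ S ω ∂μ, S, hS, EventuallyLE.refl _ _, rfl⟩
  have hEbdd : BddAbove E := by
    refine ⟨∫ ω, Z ω ∂μ, ?_⟩
    rintro x ⟨θ, hθ, -, rfl⟩
    exact integral_mono_ae (hφint θ hθ) hZint (hZ.1 θ hθ)
  set c : ℝ := sSup E with hc_def
  -- approximating sequence θ
  have hθex : ∀ k : ℕ, ∃ θ, (MemT0 𝓕 T θ ∧ S ≤ᵐ[μ] θ) ∧
      c - 1 / (k + 1) < ∫ ω, φ θ ω ∂μ := by
    intro k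
    obtain ⟨x, hx, hlt⟩ := exists_lt_of_lt_csSup hEne
      (show c - 1 / (k + 1) < c from sub_lt_self _ (by positivity))
    obtain ⟨θ, hθ, hSθ, rfl⟩ := hx
    exact ⟨θ, ⟨hθ, hSθ⟩, hlt⟩
  choose θ hθgood hθlt using hθex
  -- pasting function
  have hpaste : ∀ (a b : Ω → ℝ), (MemT0 𝓕 T a ∧ S ≤ᵐ[μ] a) → (MemT0 𝓕 T b ∧ S ≤ᵐ[μ] b) →
      ∃ τ, (MemT0 𝓕 T τ ∧ S ≤ᵐ[μ] τ) ∧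
        μ[φ a|m] ≤ᵐ[μ] μ[φ τ|m] ∧ μ[φ b|m] ≤ᵐ[μ] μ[φ τ|m] :=
    fun a b ha hb => paste_lemma hφ hφint hS ha.1 hb.1 ha.2 hb.2
  choose! pasteF hpgood hple1 hple2 using hpaste
  -- recursive sequence τs
  set τs : ℕ → Ω → ℝ := fun k => Nat.rec (θ 0) (fun k prev => pasteF prev (θ (k + 1))) k
    with hτs_def
  have hτs_succ : ∀ k, τs (k + 1) = pasteF (τs k) (θ (k + 1)) := fun k => rfl
  have hGood : ∀ k, MemT0 𝓕 T (τs k) ∧ S ≤ᵐ[μ] (τs k) := by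
    intro k
    induction k with
    | zero => exact hθgood 0
    | succ k ih => rw [hτs_succ k]; exact hpgood (τs k) (θ (k + 1)) ih (hθgood (k + 1))
  set f : ℕ → Ω → ℝ := fun k => μ[φ (τs k)|m] with hf_def
  have hmono : ∀ k, f k ≤ᵐ[μ] f (k + 1) := by
    intro k
    have := hple1 (τs k) (θ (k + 1)) (hGood k) (hθgood (k + 1))
    rw [← hτs_succ k] at this
    exact this
  have hge : ∀ k, μ[φ (θ k)|m] ≤ᵐ[μ] f k := by
    intro k
    cases k with
    | zero => exact EventuallyLE.refl _ _
    | succ k =>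
      have := hple2 (τs k) (θ (k + 1)) (hGood k) (hθgood (k + 1))
      rw [← hτs_succ k] at this
      exact this
  have hf_le_c : ∀ k, ∫ ω, f k ω ∂μ ≤ c := by
    intro k
    show ∫ ω, (μ[φ (τs k)|m]) ω ∂μ ≤ c
    rw [integral_condExp hm]
    exact le_csSup hEbdd ⟨τs k, (hGood k).1, (hGood k).2, rfl⟩
  have hf_gt : ∀ k, c - 1 / (k + 1) < ∫ ω, f k ω ∂μ := by
    intro k
    refine lt_of_lt_of_le ?_ (integral_mono_ae integrable_condExp integrable_condExp (hge k))
    rw [integral_condExp hm]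
    exact hθlt k
  set W : Ω → ℝ := μ[Z|m] with hW_def
  have hfleW : ∀ k, f k ≤ᵐ[μ] W :=
    fun k => condExp_mono (hφint _ (hGood k).1) hZint (hZ.1 _ (hGood k).1)
  have hflev : ∀ k, f k ≤ᵐ[μ] v := fun k => hv.1 (τs k) (hGood k)
  have hf0 : 0 ≤ᵐ[μ] f 0 :=
    condExp_nonneg (Eventually.of_forall fun ω => (hφ.1 _ (hGood 0).1).2 ω)
  set g : Ω → ℝ := fun ω => ⨆ k, f k ω with hg_def
  -- good a.e. set
  have hae : ∀ᵐ ω ∂μ, (∀ k, f k ω ≤ f (k + 1) ω) ∧ (∀ k, f k ω ≤ W ω) ∧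
      (∀ k, f k ω ≤ v ω) ∧ 0 ≤ f 0 ω := by
    rw [eventually_and, eventually_and, eventually_and]
    exact ⟨ae_all_iff.2 hmono, ae_all_iff.2 hfleW, ae_all_iff.2 hflev, hf0⟩
  have haework : ∀ᵐ ω ∂μ, Monotone (fun k => f k ω) ∧ BddAbove (Set.range fun k => f k ω) ∧
      Tendsto (fun k => f k ω) atTop (𝓝 (g ω)) ∧ g ω ≤ W ω ∧ g ω ≤ v ω ∧ 0 ≤ g ω := by
    filter_upwards [hae] with ω ⟨h1, h2, h3, h4⟩
    have hmon : Monotone fun k => f k ω := monotone_nat_of_le_succ h1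
    have hbdd : BddAbove (Set.range fun k => f k ω) := ⟨W ω, by rintro x ⟨k, rfl⟩; exact h2 k⟩
    refine ⟨hmon, hbdd, tendsto_atTop_ciSup hmon hbdd, ciSup_le h2, ciSup_le h3,
      h4.trans (le_ciSup hbdd 0)⟩
  have htend : ∀ᵐ ω ∂μ, Tendsto (fun k => f k ω) atTop (𝓝 (g ω)) := by
    filter_upwards [haework] with ω h; exact h.2.2.1
  have hcm : ∀ ξ : Ω → ℝ, Measurable[m] (μ[ξ|m]) := fun ξ => stronglyMeasurable_condExp.measurable
  have hfmeas : ∀ k, AEMeasurable (f k) μ :=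
    fun k => ((hcm (φ (τs k))).mono hm le_rfl).aemeasurable
  have hgaem : AEMeasurable g μ :=
    @aemeasurable_of_tendsto_metrizable_ae Ω ℝ m0 _ _ _ _ ℕ μ _ _ atTop _ _ hfmeas htend
  have hgmeas : AEStronglyMeasurable[m0] g μ :=
    hgaem.aestronglyMeasurable
  have hgint : Integrable g μ := by
    refine Integrable.mono' (show Integrable W μ from integrable_condExp) hgmeas ?_
    filter_upwards [haework] with ω h
    rw [Real.norm_eq_abs, abs_of_nonneg h.2.2.2.2.2]
    exact h.2.2.2.1
  have hfint : ∀ k, Integrable (f k) μ := fun k => integrable_condExp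
  have hintTend : Tendsto (fun k => ∫ ω, f k ω ∂μ) atTop (𝓝 (∫ ω, g ω ∂μ)) :=
    integral_tendsto_of_tendsto_of_monotone hfint hgint
      (by filter_upwards [haework] with ω h; exact h.1) htend
  have hlow : Tendsto (fun k : ℕ => c - 1 / (k + 1)) atTop (𝓝 c) := by
    have := tendsto_one_div_add_atTop_nhds_zero_nat (𝕜 := ℝ)
    simpa using (tendsto_const_nhds (x := c)).sub this
  have hIg : ∫ ω, g ω ∂μ = c := by
    have h2 : Tendsto (fun k => ∫ ω, f k ω ∂μ) atTop (𝓝 c) :=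
      tendsto_of_tendsto_of_tendsto_of_le_of_le hlow tendsto_const_nhds
        (fun k => (hf_gt k).le) hf_le_c
    exact tendsto_nhds_unique hintTend h2
  -- g is an a.e. upper bound for the whole family
  have hupper : ∀ θ0, (MemT0 𝓕 T θ0 ∧ S ≤ᵐ[μ] θ0) → μ[φ θ0|m] ≤ᵐ[μ] g := by
    intro θ0 hθ0
    set h : Ω → ℝ := μ[φ θ0|m] with hh_def
    set q : ℕ → Ω → ℝ := fun k ω => max (h ω) (f k ω) with hq_def
    have hqint : ∀ k, Integrable (q k) μ := fun k => integrable_condExp.sup integrable_condExp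
    have hq_le : ∀ k, ∫ ω, q k ω ∂μ ≤ c := by
      intro k
      have hgood := hpgood (τs k) θ0 (hGood k) hθ0
      have h1 := hple1 (τs k) θ0 (hGood k) hθ0
      have h2 := hple2 (τs k) θ0 (hGood k) hθ0
      have hqle : q k ≤ᵐ[μ] μ[φ (pasteF (τs k) θ0)|m] := by
        filter_upwards [h1, h2] with ω ha hb
        exact max_le hb ha
      calc ∫ ω, q k ω ∂μ ≤ ∫ ω, (μ[φ (pasteF (τs k) θ0)|m]) ω ∂μ :=
            integral_mono_ae (hqint k) integrable_condExp hqle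
        _ = ∫ ω, φ (pasteF (τs k) θ0) ω ∂μ := integral_condExp hm
        _ ≤ c := le_csSup hEbdd ⟨pasteF (τs k) θ0, hgood.1, hgood.2, rfl⟩
    set Q : Ω → ℝ := fun ω => max (h ω) (g ω) with hQ_def
    have hQint : Integrable Q μ := integrable_condExp.sup hgint
    have hqtend : ∀ᵐ ω ∂μ, Tendsto (fun k => q k ω) atTop (𝓝 (Q ω)) := by
      filter_upwards [htend] with ω hω
      exact tendsto_const_nhds.max hω
    have hqmono : ∀ᵐ ω ∂μ, Monotone fun k => q k ω := by
      filter_upwards [haework] with ω hω k l hkl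
      exact max_le_max le_rfl (hω.1 hkl)
    have hqintTend : Tendsto (fun k => ∫ ω, q k ω ∂μ) atTop (𝓝 (∫ ω, Q ω ∂μ)) :=
      integral_tendsto_of_tendsto_of_monotone hqint hQint hqmono hqtend
    have hQle : ∫ ω, Q ω ∂μ ≤ c := le_of_tendsto hqintTend (Eventually.of_forall hq_le)
    have hz : ∫ ω, (Q ω - g ω) ∂μ = 0 := by
      rw [integral_sub hQint hgint, hIg]
      have h2 : c ≤ ∫ ω, Q ω ∂μ := by
        rw [← hIg]
        exact integral_mono_ae hgint hQint (Eventually.of_forall fun ω => le_max_right _ _)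
      linarith
    have hd0 : (fun ω => Q ω - g ω) =ᵐ[μ] 0 :=
      (integral_eq_zero_iff_of_nonneg (fun ω => sub_nonneg.2 (le_max_right _ _))
        (hQint.sub hgint)).1 hz
    filter_upwards [hd0] with ω hω
    have hQg : Q ω = g ω := sub_eq_zero.1 hω
    exact (le_max_left (h ω) (g ω)).trans_eq hQg
  have hvle : v ≤ᵐ[μ] g := hv.2 g hupper
  have hgle : g ≤ᵐ[μ] v := by
    filter_upwards [haework] with ω h
    exact h.2.2.2.2.1
  have : v =ᵐ[μ] g := hvle.antisymm hgle
  rw [integral_congr_ae this, hIg]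

end Helpers

/-- If the admissible family `φ` is right continuous along
stopping times in expectation and `E[ess sup_{θ ∈ T_0} φ(θ)] < ∞`, then the
value-function family `{v(S), S ∈ T_0}` is right continuous along stopping times
in expectation. -/
theorem value_family_right_continuous_in_expectation
    {m0 : MeasurableSpace Ω} (μ : Measure Ω) [IsProbabilityMeasure μ]
    (𝓕 : Filtration ℝ m0) (T : ℝ) (hT : 0 ≤ T)
    (hFright : ∀ t : ℝ, 𝓕 t = ⨅ s ∈ Set.Ioi t, 𝓕 s)
    (hFnull : ∀ A : Set Ω, μ A = 0 → MeasurableSet[𝓕 0] A)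
    (φ : (Ω → ℝ) → Ω → ℝ)
    (hφ : Admissible 𝓕 T μ φ)
    (Z : Ω → ℝ) (hZ : IsEssSupFam μ (MemT0 𝓕 T) φ Z) (hZint : Integrable Z μ)
    (hφrc : RCE 𝓕 T μ φ)
    (V : (Ω → ℝ) → Ω → ℝ)
    (hV : ∀ S (hS : MemT0 𝓕 T S),
      IsEssSupFam μ (fun θ => MemT0 𝓕 T θ ∧ S ≤ᵐ[μ] θ)
        (fun θ => μ[φ θ | hS.1.measurableSpace]) (V S)) :
    RCE 𝓕 T μ V := by
  have hφint : ∀ τ, MemT0 𝓕 T τ → Integrable (φ τ) μ :=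
    fun τ hτ => integrable_of_memT0 hφ hZ hZint hτ
  intro S hS Sn hSn hdown
  have hSle : ∀ n, S ≤ᵐ[μ] Sn n := by
    intro n
    filter_upwards [hdown] with ω ⟨hmono, htend⟩
    have hanti : Antitone fun k => Sn k ω := antitone_nat_of_succ_le hmono
    exact le_of_tendsto htend (Filter.eventually_atTop.2 ⟨n, fun m hm => hanti hm⟩)
  set E : (Ω → ℝ) → Set ℝ :=
    fun R => {x | ∃ θ, MemT0 𝓕 T θ ∧ R ≤ᵐ[μ] θ ∧ ∫ ω, φ θ ω ∂μ = x} with hE_def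
  have hbdd : ∀ R, BddAbove (E R) := by
    intro R
    refine ⟨∫ ω, Z ω ∂μ, ?_⟩
    rintro x ⟨θ, hθ, -, rfl⟩
    exact integral_mono_ae (hφint θ hθ) hZint (hZ.1 θ hθ)
  have hne : ∀ R, MemT0 𝓕 T R → (E R).Nonempty :=
    fun R hR => ⟨_, R, hR, EventuallyLE.refl _ _, rfl⟩
  have hVS : ∫ ω, V S ω ∂μ = sSup (E S) := integral_value_eq_sSup hφ hZ hZint hS (hV S hS)
  have hVn : ∀ n, ∫ ω, V (Sn n) ω ∂μ = sSup (E (Sn n)) :=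
    fun n => integral_value_eq_sSup hφ hZ hZint (hSn n) (hV (Sn n) (hSn n))
  have hsub : ∀ n, E (Sn n) ⊆ E S := by
    rintro n x ⟨θ, hθ, hge, rfl⟩
    exact ⟨θ, hθ, (hSle n).trans hge, rfl⟩
  have hle : ∀ n, sSup (E (Sn n)) ≤ sSup (E S) :=
    fun n => csSup_le_csSup (hbdd S) (hne (Sn n) (hSn n)) (hsub n)
  have hfun : (fun n => ∫ ω, V (Sn n) ω ∂μ) = fun n => sSup (E (Sn n)) := funext hVn
  rw [hfun, hVS, Metric.tendsto_atTop]
  intro ε hε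
  obtain ⟨x, hx, hlt⟩ := exists_lt_of_lt_csSup (hne S hS)
    (show sSup (E S) - ε / 2 < sSup (E S) from sub_lt_self _ (half_pos hε))
  obtain ⟨θ, hθ, hSθ, rfl⟩ := hx
  set θn : ℕ → Ω → ℝ := fun n ω => max (θ ω) (Sn n ω) with hθn_def
  have hθnT0 : ∀ n, MemT0 𝓕 T (θn n) := fun n => hθ.max' (hSn n)
  have hdn : DownAS μ θn θ := by
    filter_upwards [hdown, hSθ] with ω ⟨hmono, htend⟩ hSθω
    refine ⟨fun n => max_le_max le_rfl (hmono n), ?_⟩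
    have h := (tendsto_const_nhds (x := θ ω) (f := (Filter.atTop : Filter ℕ))).max htend
    rwa [max_eq_left hSθω] at h
  have hrc := hφrc θ hθ θn hθnT0 hdn
  rw [Metric.tendsto_atTop] at hrc
  obtain ⟨N, hN⟩ := hrc (ε / 2) (half_pos hε)
  refine ⟨N, fun n hn => ?_⟩
  have h1 : sSup (E S) - ε < ∫ ω, φ (θn n) ω ∂μ := by
    have h := hN n hn
    rw [Real.dist_eq, abs_lt] at h
    linarith
  have h2 : ∫ ω, φ (θn n) ω ∂μ ≤ sSup (E (Sn n)) :=
    le_csSup (hbdd (Sn n)) ⟨θn n, hθnT0 n, Eventually.of_forall (fun ω => le_max_right _ _), rfl⟩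
  rw [Real.dist_eq, abs_lt]
  exact ⟨by linarith [hle n], by linarith [hle n, hε]⟩
end

section
/- Let {φ(θ), θ ∈ T_0} be an admissible family of nonnegative random variables with E[ess sup_{θ ∈ T_0} φ(θ)] < ∞, let v(S) = ess sup_{θ ∈ T_S} E[φ(θ) | F_S], and fix S ∈ T_0. The set 𝒯_S = {θ ∈ T_S : v(θ) = φ(θ) a.s.} is stable under pairwise minimization (if θ, θ' ∈ 𝒯_S then θ ∧ θ' ∈ 𝒯_S); consequently there exists a nonincreasing sequence (θ_n) in 𝒯_S converging a.s. to θ*(S) := ess inf 𝒯_S, and θ*(S) is a stopping time (an element of T_S). -/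
open MeasureTheory Filter Set Topology

variable {Ω : Type*}

private lemma indicator_measurable_of_trace
    {G H : MeasurableSpace Ω} {A : Set Ω}
    (hAc : MeasurableSet[G] Aᶜ)
    (htrace : ∀ B : Set Ω, MeasurableSet[H] B → MeasurableSet[G] (B ∩ A))
    {f : Ω → ℝ} (hf : Measurable[H] f) :
    Measurable[G] (A.indicator f) := by
  intro t ht
  by_cases h0 : (0 : ℝ) ∈ t
  · have hset : A.indicator f ⁻¹' t = (f ⁻¹' t ∩ A) ∪ Aᶜ := by
      ext ω
      by_cases hω : ω ∈ A <;>
        simp [Set.indicator_of_mem, Set.indicator_of_notMem, hω, h0]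
    rw [hset]
    exact (htrace _ (hf ht)).union hAc
  · have hset : A.indicator f ⁻¹' t = f ⁻¹' t ∩ A := by
      ext ω
      by_cases hω : ω ∈ A <;>
        simp [Set.indicator_of_mem, Set.indicator_of_notMem, hω, h0]
    rw [hset]
    exact htrace _ (hf ht)

private lemma condexp_eq_on {G H m0 : MeasurableSpace Ω}
    {μ : Measure Ω} [IsFiniteMeasure μ]
    (hGH : G ≤ H) (hH : H ≤ m0) {A : Set Ω}
    (hA : MeasurableSet[G] A)
    (htrace : ∀ B : Set Ω, MeasurableSet[H] B → MeasurableSet[G] (B ∩ A))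
    {X : Ω → ℝ} (hX : Integrable X μ) :
    ∀ᵐ ω ∂μ, ω ∈ A → (μ[X | H]) ω = (μ[X | G]) ω := by
  have hG : G ≤ m0 := hGH.trans hH
  have hAm0 : MeasurableSet[m0] A := hG _ hA
  have h1 : A.indicator (μ[X | H]) =ᵐ[μ] μ[A.indicator X | G] := by
    refine ae_eq_condExp_of_forall_setIntegral_eq hG (hX.indicator hAm0) ?_ ?_ ?_
    · intro s _ _
      exact (integrable_condExp.indicator hAm0).integrableOn
    · intro s hs _
      rw [setIntegral_indicator hAm0, setIntegral_indicator hAm0]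
      exact setIntegral_condExp hH hX ((hGH _ hs).inter (hGH _ hA))
    · exact ((indicator_measurable_of_trace hA.compl htrace
        (stronglyMeasurable_condExp (m := H)).measurable).stronglyMeasurable).aestronglyMeasurable
  have h2 : μ[A.indicator X | G] =ᵐ[μ] A.indicator (μ[X | G]) := condExp_indicator hX hA
  filter_upwards [h1.trans h2] with ω hω hmem
  rwa [Set.indicator_of_mem hmem, Set.indicator_of_mem hmem] at hω

/-- The set `𝒯_S = {θ ∈ T_S : v(θ) = φ(θ) a.s.}` is stable under
pairwise minimization, and there is a version `θ*(S)` of `ess inf 𝒯_S` which is a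
stopping time of `T_S` and the a.s. limit of a nonincreasing sequence in `𝒯_S`. -/
theorem essinf_of_coincidence_set_is_stopping_time
    {m0 : MeasurableSpace Ω} (μ : Measure Ω) [IsProbabilityMeasure μ]
    (𝓕 : Filtration ℝ m0) (T : ℝ) (hT : 0 ≤ T)
    (hFright : ∀ t : ℝ, 𝓕 t = ⨅ s ∈ Set.Ioi t, 𝓕 s)
    (hFnull : ∀ A : Set Ω, μ A = 0 → MeasurableSet[𝓕 0] A)
    (φ : (Ω → ℝ) → Ω → ℝ)
    (hφ : Admissible 𝓕 T μ φ)
    (Z : Ω → ℝ) (hZ : IsEssSupFam μ (MemT0 𝓕 T) φ Z) (hZint : Integrable Z μ)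
    (V : (Ω → ℝ) → Ω → ℝ)
    (hV : ∀ S (hS : MemT0 𝓕 T S),
      IsEssSupFam μ (fun θ => MemT0 𝓕 T θ ∧ S ≤ᵐ[μ] θ)
        (fun θ => μ[φ θ | hS.1.measurableSpace]) (V S))
    (S : Ω → ℝ) (hS : MemT0 𝓕 T S) :
    (∀ θ θ', (MemT0 𝓕 T θ ∧ S ≤ᵐ[μ] θ ∧ V θ =ᵐ[μ] φ θ) →
        (MemT0 𝓕 T θ' ∧ S ≤ᵐ[μ] θ' ∧ V θ' =ᵐ[μ] φ θ') →
        (MemT0 𝓕 T (fun ω => min (θ ω) (θ' ω)) ∧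
          S ≤ᵐ[μ] (fun ω => min (θ ω) (θ' ω)) ∧
          V (fun ω => min (θ ω) (θ' ω)) =ᵐ[μ] φ (fun ω => min (θ ω) (θ' ω)))) ∧
    ∃ θstar : Ω → ℝ,
      IsEssInfFam μ (fun θ => MemT0 𝓕 T θ ∧ S ≤ᵐ[μ] θ ∧ V θ =ᵐ[μ] φ θ)
        (fun θ => θ) θstar ∧
      MemT0 𝓕 T θstar ∧ S ≤ᵐ[μ] θstar ∧
      ∃ θn : ℕ → Ω → ℝ,
        (∀ n, MemT0 𝓕 T (θn n) ∧ S ≤ᵐ[μ] θn n ∧ V (θn n) =ᵐ[μ] φ (θn n)) ∧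
        (∀ n ω, θn (n + 1) ω ≤ θn n ω) ∧
        ∀ᵐ ω ∂μ, Filter.Tendsto (fun n => θn n ω) Filter.atTop (nhds (θstar ω)) := by
    classical
  have hms_le : ∀ {τ : Ω → ℝ} (hτ : IsStoppingTime 𝓕 (fun ω => (τ ω : WithTop ℝ))),
      hτ.measurableSpace ≤ m0 :=
    fun hτ => hτ.measurableSpace_le
  have hmeasR : ∀ {τ : Ω → ℝ}, IsStoppingTime 𝓕 (fun ω => (τ ω : WithTop ℝ)) → Measurable τ :=
    fun {τ} hτ => measurable_of_Iic fun i => by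
      have h := 𝓕.le i _ (hτ i)
      simp only [WithTop.coe_le_coe] at h
      exact h
  -- integrability of the family
  have hintφ : ∀ τ (hτ : MemT0 𝓕 T τ), Integrable (φ τ) μ := by
    intro τ hτ
    have hm : Measurable (φ τ) := ((hφ.1 τ hτ).1).mono (hms_le hτ.1) le_rfl
    refine hZint.mono' hm.aestronglyMeasurable ?_
    filter_upwards [hZ.1 τ hτ] with ω h
    rw [Real.norm_eq_abs, abs_of_nonneg ((hφ.1 τ hτ).2 ω)]
    exact h
  have hcond_self : ∀ τ (hτ : MemT0 𝓕 T τ), μ[φ τ | hτ.1.measurableSpace] = φ τ :=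
    fun τ hτ => condExp_of_stronglyMeasurable (hms_le hτ.1)
      ((hφ.1 τ hτ).1.stronglyMeasurable) (hintφ τ hτ)
  have hφleV : ∀ τ (hτ : MemT0 𝓕 T τ), φ τ ≤ᵐ[μ] V τ := by
    intro τ hτ
    have h : μ[φ τ | hτ.1.measurableSpace] ≤ᵐ[μ] V τ :=
      (hV τ hτ).1 τ ⟨hτ, Filter.EventuallyLE.refl _ _⟩
    rwa [hcond_self τ hτ] at h
  -- key one-sided estimate
  have key : ∀ θ θ' (hθm : MemT0 𝓕 T θ) (hθ'm : MemT0 𝓕 T θ'), V θ =ᵐ[μ] φ θ →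
      ∀ σ (hσm : MemT0 𝓕 T σ), (∀ ω, min (θ ω) (θ' ω) ≤ σ ω) →
      ∀ G : MeasurableSpace Ω, G = hθm.1.measurableSpace ⊓ hθ'm.1.measurableSpace →
      ∀ᵐ ω ∂μ, θ ω ≤ θ' ω → (μ[φ σ | G]) ω ≤ φ (fun ω => min (θ ω) (θ' ω)) ω := by
    intro θ θ' hθm hθ'm hVθ σ hσm hσge G hG
    set ν : Ω → ℝ := fun ω => min (θ ω) (θ' ω) with hνdef
    have hνm : MemT0 𝓕 T ν := ⟨hθm.1.min hθ'm.1, fun ω =>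
      ⟨le_min (hθm.2 ω).1 (hθ'm.2 ω).1, (min_le_left _ _).trans (hθm.2 ω).2⟩⟩
    set A : Set Ω := {ω | θ ω ≤ θ' ω} with hAdef
    have hAθ : MeasurableSet[hθm.1.measurableSpace] A := by
      have h := hθm.1.measurableSet_le_stopping_time hθ'm.1
      simp only [WithTop.coe_le_coe] at h
      exact h
    have hAθ' : MeasurableSet[hθ'm.1.measurableSpace] A := by
      have h := IsStoppingTime.measurableSet_stopping_time_le hθm.1 hθ'm.1
      simp only [WithTop.coe_le_coe] at h
      exact h
    have hGH : G ≤ hθm.1.measurableSpace := by rw [hG]; exact inf_le_left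
    have hA : MeasurableSet[G] A := by
      rw [hG]; exact (MeasurableSpace.measurableSet_inf (m₁ := hθm.1.measurableSpace)
        (m₂ := hθ'm.1.measurableSpace)).mpr ⟨hAθ, hAθ'⟩
    have htrace : ∀ B : Set Ω, MeasurableSet[hθm.1.measurableSpace] B →
        MeasurableSet[G] (B ∩ A) := by
      intro B hB
      rw [hG]
      refine (MeasurableSpace.measurableSet_inf (m₁ := hθm.1.measurableSpace)
        (m₂ := hθ'm.1.measurableSpace)).mpr ⟨hB.inter hAθ, ?_⟩
      refine (hθ'm.1.measurableSet _).mpr ⟨(((hθm.1.measurableSet B).mp hB).1).inter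
        (((hθ'm.1.measurableSet A).mp hAθ').1), ?_⟩
      intro t
      have hset : (B ∩ A) ∩ {ω | (θ' ω : WithTop ℝ) ≤ t}
          = (B ∩ {ω | (θ ω : WithTop ℝ) ≤ t}) ∩ (A ∩ {ω | (θ' ω : WithTop ℝ) ≤ t}) := by
        ext ω
        simp only [Set.mem_inter_iff, Set.mem_setOf_eq, hAdef, WithTop.coe_le_coe]
        constructor
        · rintro ⟨⟨hωB, hωA⟩, ht⟩; exact ⟨⟨hωB, hωA.trans ht⟩, hωA, ht⟩
        · rintro ⟨⟨hωB, _⟩, hωA, ht⟩; exact ⟨⟨hωB, hωA⟩, ht⟩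
      rw [hset]
      exact (((hθm.1.measurableSet B).mp hB).2 t).inter
        (((hθ'm.1.measurableSet A).mp hAθ').2 t)
    have hcondAeq := condexp_eq_on hGH (hms_le hθm.1) hA htrace (hintφ σ hσm)
    set ρ : Ω → ℝ := fun ω => max (σ ω) (θ ω) with hρdef
    have hρm : MemT0 𝓕 T ρ := ⟨hσm.1.max hθm.1, fun ω =>
      ⟨(hσm.2 ω).1.trans (le_max_left _ _), max_le (hσm.2 ω).2 (hθm.2 ω).2⟩⟩
    have hρV : μ[φ ρ | hθm.1.measurableSpace] ≤ᵐ[μ] V θ :=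
      (hV θ hθm).1 ρ ⟨hρm, Filter.Eventually.of_forall fun ω => le_max_right _ _⟩
    have hφσρ : A.indicator (φ σ) =ᵐ[μ] A.indicator (φ ρ) := by
      filter_upwards [hφ.2 σ ρ hσm hρm] with ω h
      by_cases hω : ω ∈ A
      · have hθν : θ ω ≤ σ ω := (min_eq_left (show θ ω ≤ θ' ω from hω)) ▸ hσge ω
        rw [Set.indicator_of_mem hω, Set.indicator_of_mem hω, h (max_eq_left hθν).symm]
      · rw [Set.indicator_of_notMem hω, Set.indicator_of_notMem hω]
    have hcondρ : A.indicator (μ[φ σ | hθm.1.measurableSpace])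
        =ᵐ[μ] A.indicator (μ[φ ρ | hθm.1.measurableSpace]) := by
      calc A.indicator (μ[φ σ | hθm.1.measurableSpace])
          =ᵐ[μ] μ[A.indicator (φ σ) | hθm.1.measurableSpace] :=
            (condExp_indicator (hintφ σ hσm) hAθ).symm
        _ =ᵐ[μ] μ[A.indicator (φ ρ) | hθm.1.measurableSpace] := condExp_congr_ae hφσρ
        _ =ᵐ[μ] A.indicator (μ[φ ρ | hθm.1.measurableSpace]) :=
            condExp_indicator (hintφ ρ hρm) hAθ
    filter_upwards [hcondAeq, hcondρ, hρV, hVθ, hφ.2 θ ν hθm hνm] with ω h1 h2 h3 h4 h5 hωA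
    have hmem : ω ∈ A := hωA
    have e2 : (μ[φ σ | hθm.1.measurableSpace]) ω
        = (μ[φ ρ | hθm.1.measurableSpace]) ω := by
      rw [Set.indicator_of_mem hmem, Set.indicator_of_mem hmem] at h2
      exact h2
    calc (μ[φ σ | G]) ω = (μ[φ ρ | hθm.1.measurableSpace]) ω := by
          rw [← h1 hmem]; exact e2
      _ ≤ V θ ω := h3
      _ = φ θ ω := h4
      _ = φ ν ω := h5 (min_eq_left (show θ ω ≤ θ' ω from hmem)).symm
  -- stability under pairwise minimization
  have stab : ∀ θ θ', (MemT0 𝓕 T θ ∧ S ≤ᵐ[μ] θ ∧ V θ =ᵐ[μ] φ θ) →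
      (MemT0 𝓕 T θ' ∧ S ≤ᵐ[μ] θ' ∧ V θ' =ᵐ[μ] φ θ') →
      (MemT0 𝓕 T (fun ω => min (θ ω) (θ' ω)) ∧
        S ≤ᵐ[μ] (fun ω => min (θ ω) (θ' ω)) ∧
        V (fun ω => min (θ ω) (θ' ω)) =ᵐ[μ] φ (fun ω => min (θ ω) (θ' ω))) := by
    rintro θ θ' ⟨hθm, hθS, hθV⟩ ⟨hθ'm, hθ'S, hθ'V⟩
    set ν : Ω → ℝ := fun ω => min (θ ω) (θ' ω) with hνdef
    have hνm : MemT0 𝓕 T ν := ⟨hθm.1.min hθ'm.1, fun ω =>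
      ⟨le_min (hθm.2 ω).1 (hθ'm.2 ω).1, (min_le_left _ _).trans (hθm.2 ω).2⟩⟩
    have hνS : S ≤ᵐ[μ] ν := by
      filter_upwards [hθS, hθ'S] with ω h1 h2; exact le_min h1 h2
    refine ⟨hνm, hνS, ?_⟩
    have hup : V ν ≤ᵐ[μ] φ ν := by
      refine (hV ν hνm).2 (φ ν) ?_
      rintro τ ⟨hτm, hτge⟩
      set σ : Ω → ℝ := fun ω => max (τ ω) (ν ω) with hσdef
      have hσm : MemT0 𝓕 T σ := ⟨hτm.1.max hνm.1, fun ω =>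
        ⟨(hτm.2 ω).1.trans (le_max_left _ _), max_le (hτm.2 ω).2 (hνm.2 ω).2⟩⟩
      have hσge : ∀ ω, ν ω ≤ σ ω := fun ω => le_max_right _ _
      have hστ : φ τ =ᵐ[μ] φ σ := by
        filter_upwards [hφ.2 τ σ hτm hσm, hτge] with ω h hge
        exact h (max_eq_left hge).symm
      have hcondστ : μ[φ τ | hνm.1.measurableSpace] =ᵐ[μ] μ[φ σ | hνm.1.measurableSpace] :=
        condExp_congr_ae hστ
      have hG : hνm.1.measurableSpace
          = hθm.1.measurableSpace ⊓ hθ'm.1.measurableSpace := by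
        exact IsStoppingTime.measurableSpace_min hθm.1 hθ'm.1
      have hG2 : hνm.1.measurableSpace
          = hθ'm.1.measurableSpace ⊓ hθm.1.measurableSpace := by rw [hG, inf_comm]
      have k1 := key θ θ' hθm hθ'm hθV σ hσm hσge _ hG
      have k2 := key θ' θ hθ'm hθm hθ'V σ hσm
        (fun ω => (min_comm (θ' ω) (θ ω)).trans_le (hσge ω)) _ hG2
      have hswap : (fun ω => min (θ' ω) (θ ω)) = ν := funext fun ω => min_comm _ _
      rw [hswap] at k2
      filter_upwards [hcondστ, k1, k2] with ω h0 h1 h2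
      show (μ[φ τ | hνm.1.measurableSpace]) ω ≤ φ ν ω
      rw [h0]
      rcases le_total (θ ω) (θ' ω) with h | h
      · exact h1 h
      · exact h2 h
    exact hup.antisymm (hφleV ν hνm)
  refine ⟨stab, ?_⟩
  -- the constant time `T` belongs to the coincidence set
  have hTm : MemT0 𝓕 T (fun _ => T) := ⟨isStoppingTime_const 𝓕 T, fun ω => ⟨hT, le_rfl⟩⟩
  have hPT : MemT0 𝓕 T (fun _ => T) ∧ S ≤ᵐ[μ] (fun _ => T) ∧
      V (fun _ => T) =ᵐ[μ] φ (fun _ => T) := by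
    refine ⟨hTm, Filter.Eventually.of_forall fun ω => (hS.2 ω).2, ?_⟩
    refine Filter.EventuallyLE.antisymm ?_ (hφleV _ hTm)
    refine (hV _ hTm).2 (φ (fun _ => T)) ?_
    rintro τ ⟨hτm, hτge⟩
    have hτT : φ τ =ᵐ[μ] φ (fun _ => T) := by
      filter_upwards [hφ.2 τ (fun _ => T) hτm hTm, hτge] with ω h hge
      exact h (le_antisymm (hτm.2 ω).2 hge)
    calc μ[φ τ | hTm.1.measurableSpace]
        =ᵐ[μ] μ[φ (fun _ => T) | hTm.1.measurableSpace] := condExp_congr_ae hτT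
      _ ≤ᵐ[μ] φ (fun _ => T) := (Filter.EventuallyEq.of_eq (hcond_self _ hTm)).le
  set P : (Ω → ℝ) → Prop :=
    fun θ => MemT0 𝓕 T θ ∧ S ≤ᵐ[μ] θ ∧ V θ =ᵐ[μ] φ θ with hPdef
  have hPint : ∀ θ, P θ → Integrable θ μ := by
    intro θ hθ
    refine (integrable_const T).mono'
      (hmeasR hθ.1.1).aestronglyMeasurable ?_
    refine Filter.Eventually.of_forall fun ω => ?_
    rw [Real.norm_eq_abs, abs_of_nonneg (hθ.1.2 ω).1]
    exact (hθ.1.2 ω).2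
  -- minimizing sequence for the infimum of expectations
  have hEne : ((fun θ : Ω → ℝ => ∫ ω, θ ω ∂μ) '' setOf P).Nonempty :=
    ⟨_, ⟨_, hPT, rfl⟩⟩
  have hEbdd : BddBelow ((fun θ : Ω → ℝ => ∫ ω, θ ω ∂μ) '' setOf P) := by
    refine ⟨0, ?_⟩
    rintro x ⟨θ, hθ, rfl⟩
    exact integral_nonneg fun ω => (hθ.1.2 ω).1
  set c : ℝ := sInf ((fun θ : Ω → ℝ => ∫ ω, θ ω ∂μ) '' setOf P) with hcdef
  have hcle : ∀ θ, P θ → c ≤ ∫ ω, θ ω ∂μ := fun θ h => csInf_le hEbdd ⟨θ, h, rfl⟩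
  have hsel : ∀ n : ℕ, ∃ θ, P θ ∧ ∫ ω, θ ω ∂μ < c + 1 / (n + 1) := by
    intro n
    have hlt : c < c + 1 / (n + 1 : ℝ) := lt_add_of_pos_right c (by positivity)
    obtain ⟨x, ⟨θ, hθ, rfl⟩, hx⟩ := exists_lt_of_csInf_lt hEne hlt
    exact ⟨θ, hθ, hx⟩
  choose θp hθpP hθplt using hsel
  set θn : ℕ → Ω → ℝ :=
    fun n => Nat.rec (θp 0) (fun k ih => fun ω => min (ih ω) (θp (k + 1) ω)) n with hθndef
  have hθnP : ∀ n, P (θn n) := by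
    intro n
    induction n with
    | zero => exact hθpP 0
    | succ k ih => exact stab _ _ ih (hθpP (k + 1))
  have hanti : ∀ n ω, θn (n + 1) ω ≤ θn n ω := fun n ω => min_le_left _ _
  have hlep : ∀ n ω, θn n ω ≤ θp n ω := by
    intro n ω
    cases n with
    | zero => exact le_rfl
    | succ k => exact min_le_right _ _
  have hθnIcc : ∀ n ω, θn n ω ∈ Set.Icc 0 T := fun n ω => (hθnP n).1.2 ω
  set θstar : Ω → ℝ := fun ω => ⨅ n, θn n ω with hθstardef
  have hbdd : ∀ ω, BddBelow (Set.range fun n => θn n ω) := by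
    intro ω
    refine ⟨0, ?_⟩
    rintro x ⟨n, rfl⟩
    exact (hθnIcc n ω).1
  have htends : ∀ ω, Tendsto (fun n => θn n ω) atTop (𝓝 (θstar ω)) := fun ω =>
    tendsto_atTop_ciInf (antitone_nat_of_succ_le fun n => hanti n ω) (hbdd ω)
  have hstar_le : ∀ n ω, θstar ω ≤ θn n ω := fun n ω => ciInf_le (hbdd ω) n
  have hstar_Icc : ∀ ω, θstar ω ∈ Set.Icc 0 T := fun ω =>
    ⟨le_ciInf fun n => (hθnIcc n ω).1, (hstar_le 0 ω).trans (hθnIcc 0 ω).2⟩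
  have hmeasn : ∀ n, Measurable (θn n) := fun n =>
    hmeasR (hθnP n).1.1
  have hmeasstar : Measurable θstar :=
    measurable_of_tendsto_metrizable hmeasn (tendsto_pi_nhds.mpr htends)
  have hintstar : Integrable θstar μ := by
    refine (integrable_const T).mono' hmeasstar.aestronglyMeasurable ?_
    refine Filter.Eventually.of_forall fun ω => ?_
    rw [Real.norm_eq_abs, abs_of_nonneg (hstar_Icc ω).1]
    exact (hstar_Icc ω).2
  have htendint : Tendsto (fun n => ∫ ω, θn n ω ∂μ) atTop (𝓝 (∫ ω, θstar ω ∂μ)) := by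
    refine tendsto_integral_of_dominated_convergence (fun _ => T)
      (fun n => (hmeasn n).aestronglyMeasurable) (integrable_const T)
      (fun n => Filter.Eventually.of_forall fun ω => ?_)
      (Filter.Eventually.of_forall htends)
    rw [Real.norm_eq_abs, abs_of_nonneg (hθnIcc n ω).1]
    exact (hθnIcc n ω).2
  have hintc : Tendsto (fun n => ∫ ω, θn n ω ∂μ) atTop (𝓝 c) := by
    refine tendsto_of_tendsto_of_tendsto_of_le_of_le (g := fun _ : ℕ => c)
      (h := fun n : ℕ => c + 1 / (n + 1)) tendsto_const_nhds ?_
      (fun n => hcle _ (hθnP n)) (fun n => ?_)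
    · simpa using (tendsto_const_nhds (x := c)).add tendsto_one_div_add_atTop_nhds_zero_nat
    · exact (integral_mono ((hPint _ (hθnP n))) (hPint _ (hθpP n)) (hlep n)).trans
        (hθplt n).le
  have hstarint : ∫ ω, θstar ω ∂μ = c := tendsto_nhds_unique htendint hintc
  -- lower bound of the essential infimum
  have hlower : ∀ θ, P θ → θstar ≤ᵐ[μ] θ := by
    intro θ hθ
    have hθmeas : Measurable θ := hmeasR hθ.1.1
    set g : Ω → ℝ := fun ω => min (θ ω) (θstar ω) with hgdef
    have hintg : Integrable g μ := by
      refine (integrable_const T).mono' (hθmeas.min hmeasstar).aestronglyMeasurable ?_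
      refine Filter.Eventually.of_forall fun ω => ?_
      rw [Real.norm_eq_abs, abs_of_nonneg (le_min (hθ.1.2 ω).1 (hstar_Icc ω).1)]
      exact (min_le_right _ _).trans (hstar_Icc ω).2
    have hback : Tendsto (fun n => ∫ ω, min (θ ω) (θn n ω) ∂μ) atTop (𝓝 (∫ ω, g ω ∂μ)) := by
      refine tendsto_integral_of_dominated_convergence (fun _ => T)
        (fun n => (hθmeas.min (hmeasn n)).aestronglyMeasurable) (integrable_const T)
        (fun n => Filter.Eventually.of_forall fun ω => ?_)
        (Filter.Eventually.of_forall fun ω => tendsto_const_nhds.min (htends ω))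
      rw [Real.norm_eq_abs, abs_of_nonneg (le_min (hθ.1.2 ω).1 (hθnIcc n ω).1)]
      exact (min_le_right _ _).trans (hθnIcc n ω).2
    have hge : c ≤ ∫ ω, g ω ∂μ := by
      refine ge_of_tendsto hback (Filter.Eventually.of_forall fun n => ?_)
      exact hcle _ (stab θ (θn n) hθ (hθnP n))
    have hnonneg : (0 : Ω → ℝ) ≤ fun ω => θstar ω - g ω := fun ω =>
      sub_nonneg.2 (min_le_right _ _)
    have hintf : Integrable (fun ω => θstar ω - g ω) μ := hintstar.sub hintg
    have hzero : ∫ ω, (θstar ω - g ω) ∂μ = 0 := by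
      refine le_antisymm ?_ (integral_nonneg hnonneg)
      rw [integral_sub hintstar hintg, hstarint]
      linarith
    have hae := (integral_eq_zero_iff_of_nonneg hnonneg hintf).mp hzero
    filter_upwards [hae] with ω h
    have hEq : θstar ω = g ω := by
      have h' : θstar ω - g ω = 0 := h
      linarith
    rw [hEq]
    exact min_le_left _ _
  have hupper : ∀ w : Ω → ℝ, (∀ θ, P θ → w ≤ᵐ[μ] θ) → w ≤ᵐ[μ] θstar := by
    intro w hw
    have h : ∀ᵐ ω ∂μ, ∀ n, w ω ≤ θn n ω := ae_all_iff.2 fun n => hw _ (hθnP n)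
    filter_upwards [h] with ω hω
    exact le_ciInf hω
  have hSstar : S ≤ᵐ[μ] θstar := hupper S fun θ hθ => hθ.2.1
  -- θstar is a stopping time
  have hstarstop : IsStoppingTime 𝓕 (fun ω => (θstar ω : WithTop ℝ)) := by
    intro t
    simp only [WithTop.coe_le_coe]
    rw [hFright t, MeasurableSpace.measurableSet_iInf]
    intro s
    rw [MeasurableSpace.measurableSet_iInf]
    intro hs
    have hts : t < s := hs
    have key_eq : {ω | θstar ω ≤ t}
        = ⋂ (k : ℕ), ⋃ (n : ℕ), {ω | θn n ω < t + (s - t) / (k + 1)} := by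
      ext ω
      simp only [Set.mem_setOf_eq, Set.mem_iInter, Set.mem_iUnion]
      constructor
      · intro h k
        have hpos : 0 < (s - t) / ((k : ℝ) + 1) := by
          have : (0 : ℝ) < s - t := sub_pos.2 hts
          positivity
        exact exists_lt_of_ciInf_lt (lt_of_le_of_lt h (lt_add_of_pos_right _ hpos))
      · intro h
        have h2 : ∀ k : ℕ, θstar ω ≤ t + (s - t) / (k + 1) := by
          intro k
          obtain ⟨n, hn⟩ := h k
          exact (hstar_le n ω).trans hn.le
        have hlim : Tendsto (fun k : ℕ => t + (s - t) / (k + 1)) atTop (𝓝 t) := by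
          have h3 : Tendsto (fun k : ℕ => (s - t) * (1 / (k + 1))) atTop
              (𝓝 ((s - t) * 0)) :=
            tendsto_one_div_add_atTop_nhds_zero_nat.const_mul (s - t)
          have h4 := (tendsto_const_nhds :
            Tendsto (fun _ : ℕ => t) atTop (𝓝 t)).add h3
          simpa [mul_one_div, div_eq_mul_inv] using h4
        exact ge_of_tendsto' hlim h2
    rw [key_eq]
    refine MeasurableSet.iInter fun k => MeasurableSet.iUnion fun n => ?_
    have hle2 : t + (s - t) / ((k : ℝ) + 1) ≤ s := by
      have h1 : (s - t) / ((k : ℝ) + 1) ≤ s - t := by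
        refine div_le_self (sub_nonneg.2 hts.le) ?_
        exact le_add_of_nonneg_left (Nat.cast_nonneg k)
      linarith
    have hlt := (hθnP n).1.1.measurableSet_lt (t + (s - t) / ((k : ℝ) + 1))
    simp only [WithTop.coe_lt_coe] at hlt
    exact 𝓕.mono hle2 _ hlt
  exact ⟨θstar, ⟨hlower, hupper⟩, ⟨hstarstop, hstar_Icc⟩, hSstar, θn,
    hθnP, hanti, Filter.Eventually.of_forall htends⟩
end
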